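/- arXiv:1509.08070 — 8 statements merged into one kernel-verified Lean document; each statement's English description precedes it below -/
import Mathlib

section
/- Let x_5 < x_4 < x_3 < x_2 < x_1 < x_0 be reals in [a,b] and let f ∈ Δ³[a,b]. Set Δ_j := [x_j, x_{j-1}, x_{j-2}, x_{j-3}; f] for j = 3, 4, 5. Then (x_1−x_4)(x_2−x_3)·Δ_4 ≤ (x_2−x_5)(x_3−x_4)·Δ_5 + (x_0−x_3)(x_1−x_2)·Δ_3 + 2·√( (x_2−x_5)(x_2−x_4)·Δ_5 · (x_0−x_3)(x_1−x_3)·Δ_3 ). -/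
/-- Third-order divided difference `[t0, t1, t2, t3; f]` at four (distinct) points. -/
noncomputable def dd4 (f : ℝ → ℝ) (t0 t1 t2 t3 : ℝ) : ℝ :=
  f t0 / ((t0 - t1) * (t0 - t2) * (t0 - t3)) +
  f t1 / ((t1 - t0) * (t1 - t2) * (t1 - t3)) +
  f t2 / ((t2 - t0) * (t2 - t1) * (t2 - t3)) +
  f t3 / ((t3 - t0) * (t3 - t1) * (t3 - t2))

/-- `f ∈ Δ³[a,b]`: `f` is continuous on `[a,b]` and all its third divided differences
over four distinct points of `[a,b]` are nonnegative (3-monotone). -/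
def Delta3 (a b : ℝ) (f : ℝ → ℝ) : Prop :=
  ContinuousOn f (Set.Icc a b) ∧
  ∀ t0 t1 t2 t3 : ℝ, t0 ∈ Set.Icc a b → t1 ∈ Set.Icc a b →
    t2 ∈ Set.Icc a b → t3 ∈ Set.Icc a b →
    t0 ≠ t1 → t0 ≠ t2 → t0 ≠ t3 → t1 ≠ t2 → t1 ≠ t3 → t2 ≠ t3 →
    0 ≤ dd4 f t0 t1 t2 t3

/-- Second-order divided difference (auxiliary). -/
noncomputable def dd3 (f : ℝ → ℝ) (u v w : ℝ) : ℝ :=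
  f u / ((u - v) * (u - w)) + f v / ((v - u) * (v - w)) + f w / ((w - u) * (w - v))

lemma ddB (y a b c : ℝ) (ha : a ≠ 0) (hb : b ≠ 0) (hc : c ≠ 0) :
    (a - b) * (y / (a * b * c)) = y / (b * c) - y / (a * c) := by
  field_simp

lemma ddC (y b c d : ℝ) (hb : b ≠ 0) (hc : c ≠ 0) (hd : d ≠ 0) :
    (-d) * (y / (b * c * d)) = -(y / (b * c)) := by
  field_simp

lemma dd4_split (f : ℝ → ℝ) {t0 t1 t2 t3 : ℝ} (h01 : t0 ≠ t1) (h02 : t0 ≠ t2)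
    (h03 : t0 ≠ t3) (h12 : t1 ≠ t2) (h13 : t1 ≠ t3) (h23 : t2 ≠ t3) :
    (t3 - t0) * dd4 f t0 t1 t2 t3 = dd3 f t1 t2 t3 - dd3 f t0 t1 t2 := by
  have a01 := sub_ne_zero_of_ne h01; have a10 := sub_ne_zero_of_ne h01.symm
  have a02 := sub_ne_zero_of_ne h02; have a20 := sub_ne_zero_of_ne h02.symm
  have a03 := sub_ne_zero_of_ne h03; have a30 := sub_ne_zero_of_ne h03.symm
  have a12 := sub_ne_zero_of_ne h12; have a21 := sub_ne_zero_of_ne h12.symm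
  have a13 := sub_ne_zero_of_ne h13; have a31 := sub_ne_zero_of_ne h13.symm
  have a23 := sub_ne_zero_of_ne h23; have a32 := sub_ne_zero_of_ne h23.symm
  unfold dd4 dd3
  linear_combination ddC (f t0) (t0-t1) (t0-t2) (t0-t3) a01 a02 a03 +
    ddB (f t1) (t1-t0) (t1-t3) (t1-t2) a10 a13 a12 +
    ddB (f t2) (t2-t0) (t2-t3) (t2-t1) a20 a23 a21 -
    ddC (f t3) (t3-t1) (t3-t2) (t3-t0) a31 a32 a30

lemma dd4_split' (f : ℝ → ℝ) {t0 t1 t2 t3 : ℝ} (h01 : t0 ≠ t1) (h02 : t0 ≠ t2)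
    (h03 : t0 ≠ t3) (h12 : t1 ≠ t2) (h13 : t1 ≠ t3) (h23 : t2 ≠ t3) :
    (t2 - t0) * dd4 f t0 t1 t2 t3 = dd3 f t1 t2 t3 - dd3 f t0 t1 t3 := by
  have a01 := sub_ne_zero_of_ne h01; have a10 := sub_ne_zero_of_ne h01.symm
  have a02 := sub_ne_zero_of_ne h02; have a20 := sub_ne_zero_of_ne h02.symm
  have a03 := sub_ne_zero_of_ne h03; have a30 := sub_ne_zero_of_ne h03.symm
  have a12 := sub_ne_zero_of_ne h12; have a21 := sub_ne_zero_of_ne h12.symm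
  have a13 := sub_ne_zero_of_ne h13; have a31 := sub_ne_zero_of_ne h13.symm
  have a23 := sub_ne_zero_of_ne h23; have a32 := sub_ne_zero_of_ne h23.symm
  unfold dd4 dd3
  linear_combination ddC (f t0) (t0-t1) (t0-t3) (t0-t2) a01 a03 a02 +
    ddB (f t1) (t1-t0) (t1-t2) (t1-t3) a10 a12 a13 -
    ddC (f t2) (t2-t1) (t2-t3) (t2-t0) a21 a23 a20 +
    ddB (f t3) (t3-t0) (t3-t2) (t3-t1) a30 a32 a31

lemma dd4_split'' (f : ℝ → ℝ) {t0 t1 t2 t3 : ℝ} (h01 : t0 ≠ t1) (h02 : t0 ≠ t2)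
    (h03 : t0 ≠ t3) (h12 : t1 ≠ t2) (h13 : t1 ≠ t3) (h23 : t2 ≠ t3) :
    (t3 - t1) * dd4 f t0 t1 t2 t3 = dd3 f t0 t2 t3 - dd3 f t0 t1 t2 := by
  have a01 := sub_ne_zero_of_ne h01; have a10 := sub_ne_zero_of_ne h01.symm
  have a02 := sub_ne_zero_of_ne h02; have a20 := sub_ne_zero_of_ne h02.symm
  have a03 := sub_ne_zero_of_ne h03; have a30 := sub_ne_zero_of_ne h03.symm
  have a12 := sub_ne_zero_of_ne h12; have a21 := sub_ne_zero_of_ne h12.symm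
  have a13 := sub_ne_zero_of_ne h13; have a31 := sub_ne_zero_of_ne h13.symm
  have a23 := sub_ne_zero_of_ne h23; have a32 := sub_ne_zero_of_ne h23.symm
  unfold dd4 dd3
  linear_combination ddB (f t0) (t0-t1) (t0-t3) (t0-t2) a01 a03 a02 +
    ddC (f t1) (t1-t0) (t1-t2) (t1-t3) a10 a12 a13 +
    ddB (f t2) (t2-t1) (t2-t3) (t2-t0) a21 a23 a20 -
    ddC (f t3) (t3-t0) (t3-t2) (t3-t1) a30 a32 a31

lemma bound_aux (x3 x2 u p q P Q : ℝ) (hx : x3 < x2) (hP : 0 ≤ P) (hQ : 0 ≤ Q)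
    (h : ∀ t, x3 < t → t < x2 →
      u * ((x2 - t) * (t - x3)) ≤ P * (t - x3) + Q * (x2 - t) - (x2 - t) * (t - x3) * (p + q)) :
    (x2 - x3) * u ≤ P + Q + 2 * Real.sqrt (P * Q) - (x2 - x3) * (p + q) := by
  have hc : (0:ℝ) < x2 - x3 := sub_pos.mpr hx
  have hsP : 0 ≤ Real.sqrt P := Real.sqrt_nonneg P
  have hsQ : 0 ≤ Real.sqrt Q := Real.sqrt_nonneg Q
  have hsP2 : Real.sqrt P * Real.sqrt P = P := Real.mul_self_sqrt hP
  have hsQ2 : Real.sqrt Q * Real.sqrt Q = Q := Real.mul_self_sqrt hQ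
  have hPQ : Real.sqrt (P * Q) = Real.sqrt P * Real.sqrt Q := Real.sqrt_mul hP Q
  rw [hPQ]
  set sP := Real.sqrt P
  set sQ := Real.sqrt Q
  clear_value sP sQ
  apply le_of_forall_pos_le_add
  intro ε hε
  obtain ⟨δ, hδ, hδε⟩ : ∃ δ:ℝ, 0 < δ ∧ δ * (2*(sP+sQ)+2) = ε :=
    ⟨ε/(2*(sP+sQ)+2), div_pos hε (by linarith), by field_simp⟩
  have hm : (0:ℝ) < sP + sQ + 2*δ := by linarith
  obtain ⟨a, ha, hapos⟩ : ∃ a:ℝ, a * (sP+sQ+2*δ) = (x2-x3)*(sP+δ) ∧ 0 < a :=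
    ⟨(x2-x3)*(sP+δ)/(sP+sQ+2*δ), by field_simp, by positivity⟩
  obtain ⟨b, hb, hbpos⟩ : ∃ b:ℝ, b * (sP+sQ+2*δ) = (x2-x3)*(sQ+δ) ∧ 0 < b :=
    ⟨(x2-x3)*(sQ+δ)/(sP+sQ+2*δ), by field_simp, by positivity⟩
  have hab : a + b = x2 - x3 := by
    have : (a + b) * (sP+sQ+2*δ) = (x2-x3) * (sP+sQ+2*δ) := by linear_combination ha + hb
    exact mul_right_cancel₀ (ne_of_gt hm) this
  have h1 : x3 < x2 - a := by linarith
  have h2 : x2 - a < x2 := by linarith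
  have H := h (x2 - a) h1 h2
  have hxt : x2 - (x2 - a) = a := by ring
  have htx : x2 - a - x3 = b := by linarith
  rw [hxt, htx] at H
  have hPsp : P ≤ sP * (sP + δ) := by nlinarith
  have hQsq : Q ≤ sQ * (sQ + δ) := by nlinarith
  have hPb : P * b ≤ sP * (sP + δ) * b := mul_le_mul_of_nonneg_right hPsp hbpos.le
  have hQa : Q * a ≤ sQ * (sQ + δ) * a := mul_le_mul_of_nonneg_right hQsq hapos.le
  have step1 : (u + p + q) * (a * b) ≤ sP * (sP + δ) * b + sQ * (sQ + δ) * a := by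
    nlinarith [H, hPb, hQa]
  have step2 : (u + p + q) * (a * b) * ((sP+sQ+2*δ) * (sP+sQ+2*δ)) ≤
      (sP * (sP + δ) * b + sQ * (sQ + δ) * a) * ((sP+sQ+2*δ) * (sP+sQ+2*δ)) :=
    mul_le_mul_of_nonneg_right step1 (by positivity)
  have lhs_eq : (a * b) * ((sP+sQ+2*δ) * (sP+sQ+2*δ)) = ((x2-x3)*(sP+δ)) * ((x2-x3)*(sQ+δ)) := by
    linear_combination (b * (sP+sQ+2*δ)) * ha + ((x2-x3)*(sP+δ)) * hb
  have rhs_eq : (sP * (sP + δ) * b + sQ * (sQ + δ) * a) * ((sP+sQ+2*δ) * (sP+sQ+2*δ)) =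
      ((x2-x3) * ((sP+δ)*(sQ+δ))) * ((sP+sQ) * (sP+sQ+2*δ)) := by
    linear_combination (sP * (sP+δ) * (sP+sQ+2*δ)) * hb + (sQ * (sQ+δ) * (sP+sQ+2*δ)) * ha
  have l1 : ((x2-x3) * (u + p + q)) * ((x2-x3) * ((sP+δ)*(sQ+δ))) =
      (u + p + q) * (a * b) * ((sP+sQ+2*δ) * (sP+sQ+2*δ)) := by
    linear_combination (-(u+p+q)) * lhs_eq
  have r1 : ((sP+sQ) * (sP+sQ+2*δ)) * ((x2-x3) * ((sP+δ)*(sQ+δ))) =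
      (sP * (sP + δ) * b + sQ * (sQ + δ) * a) * ((sP+sQ+2*δ) * (sP+sQ+2*δ)) := by
    linear_combination (-1 : ℝ) * rhs_eq
  have hW : (0:ℝ) < (x2-x3) * ((sP+δ)*(sQ+δ)) := by positivity
  have step3 : ((x2-x3) * (u + p + q)) * ((x2-x3) * ((sP+δ)*(sQ+δ))) ≤
      ((sP+sQ) * (sP+sQ+2*δ)) * ((x2-x3) * ((sP+δ)*(sQ+δ))) := by
    rw [l1, r1]; exact step2
  have step4 : (x2-x3) * (u + p + q) ≤ (sP+sQ) * (sP+sQ+2*δ) :=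
    le_of_mul_le_mul_right step3 hW
  have exp : (sP+sQ) * (sP+sQ+2*δ) = P + Q + 2*(sP*sQ) + (ε - 2*δ) := by
    linear_combination hsP2 + hsQ2 + hδε
  linarith [step4, exp, hδ]

/-- Lemma 1, inequality (9): for a 3-monotone `f` and six ordered points
`x₅ < x₄ < x₃ < x₂ < x₁ < x₀` in `[a,b]`, with `Δⱼ := [xⱼ, xⱼ₋₁, xⱼ₋₂, xⱼ₋₃; f]`,
`(x₁−x₄)(x₂−x₃)Δ₄ ≤ (x₂−x₅)(x₃−x₄)Δ₅ + (x₀−x₃)(x₁−x₂)Δ₃ + 2√((x₂−x₅)(x₂−x₄)Δ₅(x₀−x₃)(x₁−x₃)Δ₃)`. -/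
theorem statement2 (a b : ℝ) (x0 x1 x2 x3 x4 x5 : ℝ)
    (h54 : x5 < x4) (h43 : x4 < x3) (h32 : x3 < x2) (h21 : x2 < x1) (h10 : x1 < x0)
    (hm0 : x0 ∈ Set.Icc a b) (hm1 : x1 ∈ Set.Icc a b) (hm2 : x2 ∈ Set.Icc a b)
    (hm3 : x3 ∈ Set.Icc a b) (hm4 : x4 ∈ Set.Icc a b) (hm5 : x5 ∈ Set.Icc a b)
    (f : ℝ → ℝ) (hf : Delta3 a b f) :
    (x1 - x4) * (x2 - x3) * dd4 f x4 x3 x2 x1 ≤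
      (x2 - x5) * (x3 - x4) * dd4 f x5 x4 x3 x2 +
      (x0 - x3) * (x1 - x2) * dd4 f x3 x2 x1 x0 +
      2 * Real.sqrt ((x2 - x5) * (x2 - x4) * dd4 f x5 x4 x3 x2 *
        ((x0 - x3) * (x1 - x3) * dd4 f x3 x2 x1 x0)) := by
  obtain ⟨-, hdd⟩ := hf
  -- distinctness among the x's
  have n54 : x5 ≠ x4 := ne_of_lt h54
  have n53 : x5 ≠ x3 := ne_of_lt (by linarith)
  have n52 : x5 ≠ x2 := ne_of_lt (by linarith)
  have n43 : x4 ≠ x3 := ne_of_lt h43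
  have n42 : x4 ≠ x2 := ne_of_lt (by linarith)
  have n41 : x4 ≠ x1 := ne_of_lt (by linarith)
  have n32 : x3 ≠ x2 := ne_of_lt h32
  have n31 : x3 ≠ x1 := ne_of_lt (by linarith)
  have n30 : x3 ≠ x0 := ne_of_lt (by linarith)
  have n21 : x2 ≠ x1 := ne_of_lt h21
  have n20 : x2 ≠ x0 := ne_of_lt (by linarith)
  have n10 : x1 ≠ x0 := ne_of_lt h10
  have hp0 : 0 ≤ dd4 f x5 x4 x3 x2 :=
    hdd x5 x4 x3 x2 hm5 hm4 hm3 hm2 n54 n53 n52 n43 n42 n32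
  have hq0 : 0 ≤ dd4 f x3 x2 x1 x0 :=
    hdd x3 x2 x1 x0 hm3 hm2 hm1 hm0 n32 n31 n30 n21 n20 n10
  have hp : 0 ≤ (x2 - x5) * dd4 f x5 x4 x3 x2 := mul_nonneg (by linarith) hp0
  have hq : 0 ≤ (x0 - x3) * dd4 f x3 x2 x1 x0 := mul_nonneg (by linarith) hq0
  have hP : 0 ≤ (x2 - x4) * ((x2 - x5) * dd4 f x5 x4 x3 x2) := mul_nonneg (by linarith) hp
  have hQ : 0 ≤ (x1 - x3) * ((x0 - x3) * dd4 f x3 x2 x1 x0) := mul_nonneg (by linarith) hq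
  have F1 : (x2 - x5) * dd4 f x5 x4 x3 x2 = dd3 f x4 x3 x2 - dd3 f x5 x4 x3 :=
    dd4_split f n54 n53 n52 n43 n42 n32
  have F2 : (x0 - x3) * dd4 f x3 x2 x1 x0 = dd3 f x2 x1 x0 - dd3 f x3 x2 x1 :=
    dd4_split f n32 n31 n30 n21 n20 n10
  have F3 : (x1 - x4) * dd4 f x4 x3 x2 x1 = dd3 f x3 x2 x1 - dd3 f x4 x3 x2 :=
    dd4_split f n43 n42 n41 n32 n31 n21
  have key : ∀ t, x3 < t → t < x2 →
      ((x1 - x4) * dd4 f x4 x3 x2 x1) * ((x2 - t) * (t - x3)) ≤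
        ((x2 - x4) * ((x2 - x5) * dd4 f x5 x4 x3 x2)) * (t - x3) +
        ((x1 - x3) * ((x0 - x3) * dd4 f x3 x2 x1 x0)) * (x2 - t) -
        (x2 - t) * (t - x3) *
          ((x2 - x5) * dd4 f x5 x4 x3 x2 + (x0 - x3) * dd4 f x3 x2 x1 x0) := by
    intro t ht1 ht2
    have hmt : t ∈ Set.Icc a b := ⟨le_trans hm3.1 ht1.le, le_trans ht2.le hm2.2⟩
    have n5t : x5 ≠ t := ne_of_lt (by linarith)
    have n4t : x4 ≠ t := ne_of_lt (by linarith)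
    have n3t : x3 ≠ t := ne_of_lt ht1
    have nt2 : t ≠ x2 := ne_of_lt ht2
    have nt1 : t ≠ x1 := ne_of_lt (by linarith)
    have nt0 : t ≠ x0 := ne_of_lt (by linarith)
    have iA : (t - x4) * dd4 f x4 x3 t x2 = dd3 f x3 t x2 - dd3 f x4 x3 x2 :=
      dd4_split' f n43 n4t n42 n3t n32 nt2
    have iB : (x2 - x4) * dd4 f x4 x3 t x2 = dd3 f x3 t x2 - dd3 f x4 x3 t :=
      dd4_split f n43 n4t n42 n3t n32 nt2
    have iC : (t - x5) * dd4 f x5 x4 x3 t = dd3 f x4 x3 t - dd3 f x5 x4 x3 :=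
      dd4_split f n54 n53 n5t n43 n4t n3t
    have iD : (x1 - t) * dd4 f x3 t x2 x1 = dd3 f x3 x2 x1 - dd3 f x3 t x2 :=
      dd4_split'' f n3t n32 n31 nt2 nt1 n21
    have iE : (x1 - x3) * dd4 f x3 t x2 x1 = dd3 f t x2 x1 - dd3 f x3 t x2 :=
      dd4_split f n3t n32 n31 nt2 nt1 n21
    have iF : (x0 - t) * dd4 f t x2 x1 x0 = dd3 f x2 x1 x0 - dd3 f t x2 x1 :=
      dd4_split f nt2 nt1 nt0 n21 n20 n10
    have hGA : 0 ≤ dd3 f x4 x3 t - dd3 f x5 x4 x3 := by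
      have h0 : 0 ≤ (t - x5) * dd4 f x5 x4 x3 t :=
        mul_nonneg (by linarith) (hdd x5 x4 x3 t hm5 hm4 hm3 hmt n54 n53 n5t n43 n4t n3t)
      rw [iC] at h0; exact h0
    have hDH : 0 ≤ dd3 f x2 x1 x0 - dd3 f t x2 x1 := by
      have h0 : 0 ≤ (x0 - t) * dd4 f t x2 x1 x0 :=
        mul_nonneg (by linarith) (hdd t x2 x1 x0 hmt hm2 hm1 hm0 nt2 nt1 nt0 n21 n20 n10)
      rw [iF] at h0; exact h0
    have eq1 : (t - x4) * ((x2 - x5) * dd4 f x5 x4 x3 x2) -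
        (dd3 f x3 t x2 - dd3 f x4 x3 x2) * (x2 - t) =
        (t - x4) * (dd3 f x4 x3 t - dd3 f x5 x4 x3) := by
      linear_combination (t - x4) * F1 - (t - x4) * iB + (x2 - x4) * iA
    have key1 : (dd3 f x3 t x2 - dd3 f x4 x3 x2) * (x2 - t) ≤
        (t - x4) * ((x2 - x5) * dd4 f x5 x4 x3 x2) := by
      nlinarith [mul_nonneg (show (0:ℝ) ≤ t - x4 by linarith) hGA, eq1]
    have eq2 : (x1 - t) * ((x0 - x3) * dd4 f x3 x2 x1 x0) -
        (dd3 f x3 x2 x1 - dd3 f x3 t x2) * (t - x3) =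
        (x1 - t) * (dd3 f x2 x1 x0 - dd3 f t x2 x1) := by
      linear_combination (x1 - t) * F2 - (x1 - t) * iE + (x1 - x3) * iD
    have key2 : (dd3 f x3 x2 x1 - dd3 f x3 t x2) * (t - x3) ≤
        (x1 - t) * ((x0 - x3) * dd4 f x3 x2 x1 x0) := by
      nlinarith [mul_nonneg (show (0:ℝ) ≤ x1 - t by linarith) hDH, eq2]
    have k1 := mul_le_mul_of_nonneg_right key1 (show (0:ℝ) ≤ t - x3 by linarith)
    have k2 := mul_le_mul_of_nonneg_right key2 (show (0:ℝ) ≤ x2 - t by linarith)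
    rw [F3]
    linarith [k1, k2]
  have B := bound_aux x3 x2 ((x1 - x4) * dd4 f x4 x3 x2 x1)
    ((x2 - x5) * dd4 f x5 x4 x3 x2) ((x0 - x3) * dd4 f x3 x2 x1 x0)
    ((x2 - x4) * ((x2 - x5) * dd4 f x5 x4 x3 x2))
    ((x1 - x3) * ((x0 - x3) * dd4 f x3 x2 x1 x0)) h32 hP hQ key
  have congr_sqrt : (x2 - x5) * (x2 - x4) * dd4 f x5 x4 x3 x2 *
      ((x0 - x3) * (x1 - x3) * dd4 f x3 x2 x1 x0) =
      ((x2 - x4) * ((x2 - x5) * dd4 f x5 x4 x3 x2)) *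
      ((x1 - x3) * ((x0 - x3) * dd4 f x3 x2 x1 x0)) := by ring
  rw [congr_sqrt]
  linarith [B]
end

section
/- Let h > 0 and let x_j := x_0 − j·h for j = 0,…,5 (equidistant points, x_5 < x_4 < … < x_0) lie in [a,b], and let f ∈ Δ³[a,b]. Set Δ_j := [x_j, x_{j-1}, x_{j-2}, x_{j-3}; f] for j = 3, 4, 5, and define C := (x_0−x_3)(x_1−x_2)·Δ_3 − (x_2−x_5)·((x_2−x_4) + (x_2−x_3))·Δ_5 and D := (x_2−x_5)(x_3−x_4)·Δ_5 − (x_0−x_3)·((x_2−x_3) + (x_1−x_3))·Δ_3. If Δ_5 ≤ Δ_4 and Δ_3 ≤ Δ_4, then (x_1−x_4)(x_2−x_3)·Δ_4 ≥ max{C, D}. -/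
/-- Lemma 1, first inequality of (10), for equidistant points: if
`Δ₅ ≤ Δ₄` and `Δ₃ ≤ Δ₄` then `(x₁−x₄)(x₂−x₃)Δ₄ ≥ max{C, D}`. -/
theorem statement3 (a b h : ℝ) (hh : 0 < h) (x0 x1 x2 x3 x4 x5 : ℝ)
    (hx1 : x1 = x0 - h) (hx2 : x2 = x0 - 2 * h) (hx3 : x3 = x0 - 3 * h)
    (hx4 : x4 = x0 - 4 * h) (hx5 : x5 = x0 - 5 * h)
    (hm0 : x0 ∈ Set.Icc a b) (hm1 : x1 ∈ Set.Icc a b) (hm2 : x2 ∈ Set.Icc a b)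
    (hm3 : x3 ∈ Set.Icc a b) (hm4 : x4 ∈ Set.Icc a b) (hm5 : x5 ∈ Set.Icc a b)
    (f : ℝ → ℝ) (hf : Delta3 a b f)
    (Δ3 Δ4 Δ5 : ℝ)
    (hΔ3 : Δ3 = dd4 f x3 x2 x1 x0) (hΔ4 : Δ4 = dd4 f x4 x3 x2 x1)
    (hΔ5 : Δ5 = dd4 f x5 x4 x3 x2)
    (C D : ℝ)
    (hC : C = (x0 - x3) * (x1 - x2) * Δ3 - (x2 - x5) * ((x2 - x4) + (x2 - x3)) * Δ5)
    (hD : D = (x2 - x5) * (x3 - x4) * Δ5 - (x0 - x3) * ((x2 - x3) + (x1 - x3)) * Δ3)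
    (h54 : Δ5 ≤ Δ4) (h34 : Δ3 ≤ Δ4) :
    max C D ≤ (x1 - x4) * (x2 - x3) * Δ4 := by
  subst hx1 hx2 hx3 hx4 hx5
  have h3 : 0 ≤ Δ3 := by
    rw [hΔ3]
    refine hf.2 _ _ _ _ hm3 hm2 hm1 hm0 ?_ ?_ ?_ ?_ ?_ ?_ <;> (intro e; nlinarith)
  have h5 : 0 ≤ Δ5 := by
    rw [hΔ5]
    refine hf.2 _ _ _ _ hm5 hm4 hm3 hm2 ?_ ?_ ?_ ?_ ?_ ?_ <;> (intro e; nlinarith)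
  subst hC hD
  rw [max_le_iff]
  constructor <;> nlinarith [sq_nonneg h, mul_nonneg (mul_nonneg hh.le hh.le) h3,
    mul_nonneg (mul_nonneg hh.le hh.le) h5,
    mul_le_mul_of_nonneg_left h34 (mul_nonneg hh.le hh.le),
    mul_le_mul_of_nonneg_left h54 (mul_nonneg hh.le hh.le)]
end

section
/- Let x_5 < x_4 < x_3 < x_2 < x_1 < x_0 be reals in [a,b], let f ∈ Δ³[a,b], and let y ∈ (x_3, x_2). Set Δ_j := [x_j, x_{j-1}, x_{j-2}, x_{j-3}; f] for j = 3, 4, 5. Then Δ_4 ≤ ((y−x_4)(x_2−x_5))/((x_2−y)(x_1−x_4))·Δ_5 + ((x_1−y)(x_0−x_3))/((y−x_3)(x_1−x_4))·Δ_3. -/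
set_option maxHeartbeats 2000000 in
/-- The key algebraic identity behind (11), cleared of the denominators
`(x1-x4)`, `(x2-y)`, `(y-x3)`: the "error" of the claimed bound is a positive
combination of third divided differences at points involving `y`. -/
lemma key_identity (x0 x1 x2 x3 x4 x5 y : ℝ) (f : ℝ → ℝ)
    (h54 : x5 < x4) (h43 : x4 < x3) (h3y : x3 < y) (hy2 : y < x2)
    (h21 : x2 < x1) (h10 : x1 < x0) :
    (y - x4) * (x2 - x5) * (y - x3) * dd4 f x5 x4 x3 x2 +
      (x1 - y) * (x0 - x3) * (x2 - y) * dd4 f x3 x2 x1 x0 -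
      (x1 - x4) * (x2 - y) * (y - x3) * dd4 f x4 x3 x2 x1 =
    (x0 - y) * (x1 - y) * (x2 - y) * dd4 f x0 x1 x2 y +
      (y - x4) * (y - x5) * (y - x3) * dd4 f x3 x4 x5 y := by
  have n45 : x4 - x5 ≠ 0 := sub_ne_zero.mpr (by linarith)
  have n35 : x3 - x5 ≠ 0 := sub_ne_zero.mpr (by linarith)
  have n25 : x2 - x5 ≠ 0 := sub_ne_zero.mpr (by linarith)
  have n34 : x3 - x4 ≠ 0 := sub_ne_zero.mpr (by linarith)
  have n24 : x2 - x4 ≠ 0 := sub_ne_zero.mpr (by linarith)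
  have n14 : x1 - x4 ≠ 0 := sub_ne_zero.mpr (by linarith)
  have n23 : x2 - x3 ≠ 0 := sub_ne_zero.mpr (by linarith)
  have n13 : x1 - x3 ≠ 0 := sub_ne_zero.mpr (by linarith)
  have n03 : x0 - x3 ≠ 0 := sub_ne_zero.mpr (by linarith)
  have n12 : x1 - x2 ≠ 0 := sub_ne_zero.mpr (by linarith)
  have n02 : x0 - x2 ≠ 0 := sub_ne_zero.mpr (by linarith)
  have n01 : x0 - x1 ≠ 0 := sub_ne_zero.mpr (by linarith)
  have m54 : x5 - x4 ≠ 0 := sub_ne_zero.mpr (by linarith)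
  have m53 : x5 - x3 ≠ 0 := sub_ne_zero.mpr (by linarith)
  have m52 : x5 - x2 ≠ 0 := sub_ne_zero.mpr (by linarith)
  have m43 : x4 - x3 ≠ 0 := sub_ne_zero.mpr (by linarith)
  have m42 : x4 - x2 ≠ 0 := sub_ne_zero.mpr (by linarith)
  have m41 : x4 - x1 ≠ 0 := sub_ne_zero.mpr (by linarith)
  have m32 : x3 - x2 ≠ 0 := sub_ne_zero.mpr (by linarith)
  have m31 : x3 - x1 ≠ 0 := sub_ne_zero.mpr (by linarith)
  have m30 : x3 - x0 ≠ 0 := sub_ne_zero.mpr (by linarith)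
  have m21 : x2 - x1 ≠ 0 := sub_ne_zero.mpr (by linarith)
  have m20 : x2 - x0 ≠ 0 := sub_ne_zero.mpr (by linarith)
  have m10 : x1 - x0 ≠ 0 := sub_ne_zero.mpr (by linarith)
  have ky5 : x5 - y ≠ 0 := sub_ne_zero.mpr (by linarith)
  have ky4 : x4 - y ≠ 0 := sub_ne_zero.mpr (by linarith)
  have ky3 : x3 - y ≠ 0 := sub_ne_zero.mpr (by linarith)
  have ky2 : x2 - y ≠ 0 := sub_ne_zero.mpr (by linarith)
  have ky1 : x1 - y ≠ 0 := sub_ne_zero.mpr (by linarith)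
  have ky0 : x0 - y ≠ 0 := sub_ne_zero.mpr (by linarith)
  have ly5 : y - x5 ≠ 0 := sub_ne_zero.mpr (by linarith)
  have ly4 : y - x4 ≠ 0 := sub_ne_zero.mpr (by linarith)
  have ly3 : y - x3 ≠ 0 := sub_ne_zero.mpr (by linarith)
  have ly2 : y - x2 ≠ 0 := sub_ne_zero.mpr (by linarith)
  have ly1 : y - x1 ≠ 0 := sub_ne_zero.mpr (by linarith)
  have ly0 : y - x0 ≠ 0 := sub_ne_zero.mpr (by linarith)
  have e5 : (y - x4) * (x2 - x5) * (y - x3) *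
        (f x5 / ((x5 - x4) * (x5 - x3) * (x5 - x2))) =
      (y - x4) * (y - x5) * (y - x3) *
        (f x5 / ((x5 - x3) * (x5 - x4) * (x5 - y))) := by
    field_simp
    ring
  have e4 : (y - x4) * (x2 - x5) * (y - x3) *
        (f x4 / ((x4 - x5) * (x4 - x3) * (x4 - x2))) -
      (x1 - x4) * (x2 - y) * (y - x3) *
        (f x4 / ((x4 - x3) * (x4 - x2) * (x4 - x1))) =
      (y - x4) * (y - x5) * (y - x3) *
        (f x4 / ((x4 - x3) * (x4 - x5) * (x4 - y))) := by
    field_simp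
    ring
  have e3 : (y - x4) * (x2 - x5) * (y - x3) *
        (f x3 / ((x3 - x5) * (x3 - x4) * (x3 - x2))) +
      (x1 - y) * (x0 - x3) * (x2 - y) *
        (f x3 / ((x3 - x2) * (x3 - x1) * (x3 - x0))) -
      (x1 - x4) * (x2 - y) * (y - x3) *
        (f x3 / ((x3 - x4) * (x3 - x2) * (x3 - x1))) =
      (y - x4) * (y - x5) * (y - x3) *
        (f x3 / ((x3 - x4) * (x3 - x5) * (x3 - y))) := by
    field_simp
    ring
  have e2 : (y - x4) * (x2 - x5) * (y - x3) *
        (f x2 / ((x2 - x5) * (x2 - x4) * (x2 - x3))) +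
      (x1 - y) * (x0 - x3) * (x2 - y) *
        (f x2 / ((x2 - x3) * (x2 - x1) * (x2 - x0))) -
      (x1 - x4) * (x2 - y) * (y - x3) *
        (f x2 / ((x2 - x4) * (x2 - x3) * (x2 - x1))) =
      (x0 - y) * (x1 - y) * (x2 - y) *
        (f x2 / ((x2 - x0) * (x2 - x1) * (x2 - y))) := by
    field_simp
    ring
  have e1 : (x1 - y) * (x0 - x3) * (x2 - y) *
        (f x1 / ((x1 - x3) * (x1 - x2) * (x1 - x0))) -
      (x1 - x4) * (x2 - y) * (y - x3) *
        (f x1 / ((x1 - x4) * (x1 - x3) * (x1 - x2))) =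
      (x0 - y) * (x1 - y) * (x2 - y) *
        (f x1 / ((x1 - x0) * (x1 - x2) * (x1 - y))) := by
    field_simp
    ring
  have e0 : (x1 - y) * (x0 - x3) * (x2 - y) *
        (f x0 / ((x0 - x3) * (x0 - x2) * (x0 - x1))) =
      (x0 - y) * (x1 - y) * (x2 - y) *
        (f x0 / ((x0 - x1) * (x0 - x2) * (x0 - y))) := by
    field_simp
  have ey : (0:ℝ) =
      (x0 - y) * (x1 - y) * (x2 - y) *
        (f y / ((y - x0) * (y - x1) * (y - x2))) +
      (y - x4) * (y - x5) * (y - x3) *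
        (f y / ((y - x3) * (y - x4) * (y - x5))) := by
    field_simp
    ring
  unfold dd4
  linear_combination e5 + e4 + e3 + e2 + e1 + e0 + ey

/-- Consequence of identity (11) for 3-monotone `f`: for every `y ∈ (x₃, x₂)`,
`Δ₄ ≤ ((y−x₄)(x₂−x₅))/((x₂−y)(x₁−x₄))·Δ₅ + ((x₁−y)(x₀−x₃))/((y−x₃)(x₁−x₄))·Δ₃`. -/
theorem statement6 (a b : ℝ) (x0 x1 x2 x3 x4 x5 : ℝ)
    (h54 : x5 < x4) (h43 : x4 < x3) (h32 : x3 < x2) (h21 : x2 < x1) (h10 : x1 < x0)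
    (hm0 : x0 ∈ Set.Icc a b) (hm1 : x1 ∈ Set.Icc a b) (hm2 : x2 ∈ Set.Icc a b)
    (hm3 : x3 ∈ Set.Icc a b) (hm4 : x4 ∈ Set.Icc a b) (hm5 : x5 ∈ Set.Icc a b)
    (f : ℝ → ℝ) (hf : Delta3 a b f)
    (y : ℝ) (hy : y ∈ Set.Ioo x3 x2) :
    dd4 f x4 x3 x2 x1 ≤
      ((y - x4) * (x2 - x5)) / ((x2 - y) * (x1 - x4)) * dd4 f x5 x4 x3 x2 +
      ((x1 - y) * (x0 - x3)) / ((y - x3) * (x1 - x4)) * dd4 f x3 x2 x1 x0 := by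
  obtain ⟨h3y, hy2⟩ := hy
  have hmy : y ∈ Set.Icc a b := ⟨le_trans hm3.1 h3y.le, le_trans hy2.le hm2.2⟩
  have key := key_identity x0 x1 x2 x3 x4 x5 y f h54 h43 h3y hy2 h21 h10
  have hP : 0 ≤ dd4 f x0 x1 x2 y :=
    hf.2 x0 x1 x2 y hm0 hm1 hm2 hmy (by linarith) (by linarith) (by linarith)
      (by linarith) (by linarith) (by linarith)
  have hQ : 0 ≤ dd4 f x3 x4 x5 y :=
    hf.2 x3 x4 x5 y hm3 hm4 hm5 hmy (by linarith) (by linarith) (by linarith)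
      (by linarith) (by linarith) (by linarith)
  -- positivity of the coefficients in the scaled identity
  have c0 : 0 ≤ (x0 - y) * (x1 - y) * (x2 - y) := by
    apply mul_nonneg (mul_nonneg (by linarith) (by linarith)) (by linarith)
  have c1 : 0 ≤ (y - x4) * (y - x5) * (y - x3) := by
    apply mul_nonneg (mul_nonneg (by linarith) (by linarith)) (by linarith)
  have hG : 0 ≤ (y - x4) * (x2 - x5) * (y - x3) * dd4 f x5 x4 x3 x2 +
      (x1 - y) * (x0 - x3) * (x2 - y) * dd4 f x3 x2 x1 x0 -
      (x1 - x4) * (x2 - y) * (y - x3) * dd4 f x4 x3 x2 x1 := by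
    rw [key]
    have := mul_nonneg c0 hP
    have := mul_nonneg c1 hQ
    linarith
  have hMpos : 0 < (x1 - x4) * (x2 - y) * (y - x3) := by
    apply mul_pos (mul_pos (by linarith) (by linarith)) (by linarith)
  rw [← sub_nonneg]
  have hrw : ((y - x4) * (x2 - x5)) / ((x2 - y) * (x1 - x4)) * dd4 f x5 x4 x3 x2 +
      ((x1 - y) * (x0 - x3)) / ((y - x3) * (x1 - x4)) * dd4 f x3 x2 x1 x0 -
      dd4 f x4 x3 x2 x1 =
      ((y - x4) * (x2 - x5) * (y - x3) * dd4 f x5 x4 x3 x2 +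
        (x1 - y) * (x0 - x3) * (x2 - y) * dd4 f x3 x2 x1 x0 -
        (x1 - x4) * (x2 - y) * (y - x3) * dd4 f x4 x3 x2 x1) /
        ((x1 - x4) * (x2 - y) * (y - x3)) := by
    have n14 : x1 - x4 ≠ 0 := sub_ne_zero.mpr (by linarith)
    have n2y : x2 - y ≠ 0 := sub_ne_zero.mpr (by linarith)
    have ny3 : y - x3 ≠ 0 := sub_ne_zero.mpr (by linarith)
    field_simp
  rw [hrw]
  exact div_nonneg hG hMpos.le
end

section
/- Let n, q ∈ ℕ with 1 ≤ q ≤ n, let a = a_n < a_{n-1} < … < a_1 < a_0 = b be reals, and let g : [a,b] → ℝ. Define the piecewise-polynomial function S_q : [a,b] → ℝ by S_q(x) = L(x; a_q,…,a_0; g) for x ∈ [a_q, b], and S_q(x) = L(x; a_j,…,a_{j-q}; g) for x ∈ [a_j, a_{j-1}) and j = q+1,…,n, where L(x; t_0,…,t_q; g) denotes the Lagrange interpolation polynomial of degree ≤ q to g at the nodes t_0,…,t_q. For j = q,…,n let Ψ_q(x, a_j) := Π_{k=j−q+1}^{j} (x − a_k) if x > a_j and Ψ_q(x, a_j) := 0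 if x ≤ a_j. Then for all x ∈ [a,b]: S_q(x) = L(x; a_n,…,a_{n-q}; g) + Σ_{j=q}^{n-1} [a_{j+1}, a_j, …, a_{j-q}; g]·(a_{j-q} − a_{j+1})·Ψ_q(x, a_j). -/
open Finset


/-- Evaluation at `x` of the Lagrange interpolation polynomial of `g`
at the (distinct) nodes `t 0, …, t (m-1)`. -/
noncomputable def lagEval {m : ℕ} (g : ℝ → ℝ) (t : Fin m → ℝ) (x : ℝ) : ℝ :=
  ∑ i, g (t i) * ∏ l ∈ Finset.univ.erase i, ((x - t l) / (t i - t l))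

/-- Divided difference `[t 0, …, t (m-1); g]` at `m` (distinct) points. -/
noncomputable def divDiff {m : ℕ} (g : ℝ → ℝ) (t : Fin m → ℝ) : ℝ :=
  ∑ i, g (t i) / ∏ l ∈ Finset.univ.erase i, (t i - t l)

lemma sum_succ_erase {q : ℕ} (f : Fin (q + 2) → ℝ) :
    ∑ i : Fin (q + 1), f i.succ = ∑ i ∈ Finset.univ.erase (0 : Fin (q + 2)), f i := by
  have h1 := Fin.sum_univ_succ f
  have h2 := Finset.add_sum_erase Finset.univ f (Finset.mem_univ (0 : Fin (q + 2)))
  linarith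

lemma sum_castSucc_erase {q : ℕ} (f : Fin (q + 2) → ℝ) :
    ∑ i : Fin (q + 1), f i.castSucc
      = ∑ i ∈ Finset.univ.erase (Fin.last (q + 1)), f i := by
  have h1 := Fin.sum_univ_castSucc f
  have h2 := Finset.add_sum_erase Finset.univ f (Finset.mem_univ (Fin.last (q + 1)))
  linarith

lemma prod_succ_erase {q : ℕ} (j : Fin (q + 1)) (h : Fin (q + 2) → ℝ) :
    ∏ l ∈ Finset.univ.erase j, h l.succ
      = ∏ l ∈ (Finset.univ.erase (0 : Fin (q + 2))).erase j.succ, h l := by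
  refine Finset.prod_bij (fun l _ => l.succ) ?_ ?_ ?_ ?_
  · intro l hl
    simp only [mem_erase, mem_univ, and_true] at hl ⊢
    exact ⟨fun e => hl (Fin.succ_injective _ e), Fin.succ_ne_zero l⟩
  · intro l₁ _ l₂ _ e
    exact Fin.succ_injective _ e
  · intro c hc
    simp only [mem_erase, mem_univ, and_true] at hc
    obtain ⟨l, rfl⟩ := Fin.exists_succ_eq.mpr hc.2
    refine ⟨l, ?_, rfl⟩
    simp only [mem_erase, mem_univ, and_true]
    exact fun e => hc.1 (by rw [e])
  · intro l _; rfl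

lemma prod_castSucc_erase {q : ℕ} (j : Fin (q + 1)) (h : Fin (q + 2) → ℝ) :
    ∏ l ∈ Finset.univ.erase j, h l.castSucc
      = ∏ l ∈ (Finset.univ.erase (Fin.last (q + 1))).erase j.castSucc, h l := by
  refine Finset.prod_bij (fun l _ => l.castSucc) ?_ ?_ ?_ ?_
  · intro l hl
    simp only [mem_erase, mem_univ, and_true] at hl ⊢
    exact ⟨fun e => hl (Fin.castSucc_injective _ e), (Fin.castSucc_lt_last l).ne⟩
  · intro l₁ _ l₂ _ e
    exact Fin.castSucc_injective _ e
  · intro c hc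
    simp only [mem_erase, mem_univ, and_true] at hc
    obtain ⟨l, rfl⟩ := Fin.exists_castSucc_eq.mpr hc.2
    refine ⟨l, ?_, rfl⟩
    simp only [mem_erase, mem_univ, and_true]
    exact fun e => hc.1 (by rw [e])
  · intro l _; rfl

noncomputable def FF {q : ℕ} (g : ℝ → ℝ) (b : Fin (q + 2) → ℝ) (x : ℝ) (i : Fin (q + 2)) : ℝ :=
  g (b i) * ∏ l ∈ (Finset.univ.erase (0 : Fin (q + 2))).erase i, ((x - b l) / (b i - b l))

noncomputable def GG {q : ℕ} (g : ℝ → ℝ) (b : Fin (q + 2) → ℝ) (x : ℝ) (i : Fin (q + 2)) : ℝ :=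
  g (b i) * ∏ l ∈ (Finset.univ.erase (Fin.last (q + 1))).erase i, ((x - b l) / (b i - b l))

noncomputable def HH {q : ℕ} (g : ℝ → ℝ) (b : Fin (q + 2) → ℝ) (x : ℝ) (i : Fin (q + 2)) : ℝ :=
  g (b i) * ((b (Fin.last (q + 1)) - b 0)
      * (∏ l ∈ (Finset.univ.erase (0 : Fin (q + 2))).erase (Fin.last (q + 1)), (x - b l))
      / ∏ l ∈ Finset.univ.erase i, (b i - b l))

lemma lag_succ {q : ℕ} (g : ℝ → ℝ) (b : Fin (q + 2) → ℝ) (x : ℝ) :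
    lagEval g (fun i : Fin (q + 1) => b i.succ) x
      = ∑ i ∈ Finset.univ.erase (0 : Fin (q + 2)), FF g b x i := by
  rw [lagEval, ← sum_succ_erase (FF g b x)]
  refine Finset.sum_congr rfl fun i _ => ?_
  show g (b i.succ) * ∏ l ∈ Finset.univ.erase i, ((x - b l.succ) / (b i.succ - b l.succ))
      = FF g b x i.succ
  rw [FF, prod_succ_erase i (fun l => (x - b l) / (b i.succ - b l))]

lemma lag_castSucc {q : ℕ} (g : ℝ → ℝ) (b : Fin (q + 2) → ℝ) (x : ℝ) :
    lagEval g (fun i : Fin (q + 1) => b i.castSucc) x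
      = ∑ i ∈ Finset.univ.erase (Fin.last (q + 1)), GG g b x i := by
  rw [lagEval, ← sum_castSucc_erase (GG g b x)]
  refine Finset.sum_congr rfl fun i _ => ?_
  show g (b i.castSucc) * ∏ l ∈ Finset.univ.erase i, ((x - b l.castSucc) / (b i.castSucc - b l.castSucc))
      = GG g b x i.castSucc
  rw [GG, prod_castSucc_erase i (fun l => (x - b l) / (b i.castSucc - b l))]

lemma dd_expand {q : ℕ} (g : ℝ → ℝ) (b : Fin (q + 2) → ℝ) (x : ℝ) :
    divDiff g b * (b (Fin.last (q + 1)) - b 0)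
        * ∏ l ∈ (Finset.univ.erase (0 : Fin (q + 2))).erase (Fin.last (q + 1)), (x - b l)
      = ∑ i, HH g b x i := by
  rw [divDiff, Finset.sum_mul, Finset.sum_mul]
  refine Finset.sum_congr rfl fun i _ => ?_
  rw [HH]; ring

lemma point_T {q : ℕ} (g : ℝ → ℝ) (b : Fin (q + 2) → ℝ) (hb : Function.Injective b) (x : ℝ) :
    FF g b x (Fin.last (q + 1)) = HH g b x (Fin.last (q + 1)) := by
  have hne : ∀ i l : Fin (q + 2), i ≠ l → b i - b l ≠ 0 := fun i l h =>
    sub_ne_zero.mpr fun e => h (hb e)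
  have hT0 : Fin.last (q + 1) ≠ (0 : Fin (q + 2)) := by
    simp [Fin.ext_iff]
  have h0mem : (0 : Fin (q + 2)) ∈ Finset.univ.erase (Fin.last (q + 1)) := by
    simp [hT0.symm]
  have hD : ∏ l ∈ Finset.univ.erase (Fin.last (q + 1)), (b (Fin.last (q + 1)) - b l)
      = (b (Fin.last (q + 1)) - b 0)
        * ∏ l ∈ (Finset.univ.erase (0 : Fin (q + 2))).erase (Fin.last (q + 1)),
            (b (Fin.last (q + 1)) - b l) := by
    rw [← Finset.mul_prod_erase _ _ h0mem, Finset.erase_right_comm]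
  have hQ : (∏ l ∈ (Finset.univ.erase (0 : Fin (q + 2))).erase (Fin.last (q + 1)),
      (b (Fin.last (q + 1)) - b l)) ≠ 0 := by
    refine Finset.prod_ne_zero_iff.mpr fun l hl => ?_
    simp only [Finset.mem_erase] at hl
    exact hne _ _ (Ne.symm hl.1)
  rw [FF, HH, hD, Finset.prod_div_distrib]
  rw [mul_div_mul_left _ _ (hne _ _ hT0)]

lemma point_0 {q : ℕ} (g : ℝ → ℝ) (b : Fin (q + 2) → ℝ) (hb : Function.Injective b) (x : ℝ) :
    GG g b x 0 = - HH g b x 0 := by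
  have hne : ∀ i l : Fin (q + 2), i ≠ l → b i - b l ≠ 0 := fun i l h =>
    sub_ne_zero.mpr fun e => h (hb e)
  have hT0 : Fin.last (q + 1) ≠ (0 : Fin (q + 2)) := by
    simp [Fin.ext_iff]
  have hTmem : Fin.last (q + 1) ∈ Finset.univ.erase (0 : Fin (q + 2)) := by
    simp [hT0]
  have hD : ∏ l ∈ Finset.univ.erase (0 : Fin (q + 2)), (b 0 - b l)
      = (b 0 - b (Fin.last (q + 1)))
        * ∏ l ∈ (Finset.univ.erase (0 : Fin (q + 2))).erase (Fin.last (q + 1)), (b 0 - b l) := by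
    rw [← Finset.mul_prod_erase _ _ hTmem]
  have hQ : (∏ l ∈ (Finset.univ.erase (0 : Fin (q + 2))).erase (Fin.last (q + 1)),
      (b 0 - b l)) ≠ 0 := by
    refine Finset.prod_ne_zero_iff.mpr fun l hl => ?_
    simp only [Finset.mem_erase] at hl
    exact hne _ _ (Ne.symm hl.2.1)
  have hset : (Finset.univ.erase (Fin.last (q + 1))).erase (0 : Fin (q + 2))
      = (Finset.univ.erase (0 : Fin (q + 2))).erase (Fin.last (q + 1)) :=
    Finset.erase_right_comm
  rw [GG, HH, hD, hset, Finset.prod_div_distrib]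
  have h1 : b 0 - b (Fin.last (q + 1)) ≠ 0 := hne _ _ hT0.symm
  field_simp
  ring

lemma point_mid {q : ℕ} (g : ℝ → ℝ) (b : Fin (q + 2) → ℝ) (hb : Function.Injective b) (x : ℝ)
    (i : Fin (q + 2)) (hi0 : i ≠ 0) (hiT : i ≠ Fin.last (q + 1)) :
    FF g b x i - GG g b x i = HH g b x i := by
  have hne : ∀ i l : Fin (q + 2), i ≠ l → b i - b l ≠ 0 := fun i l h =>
    sub_ne_zero.mpr fun e => h (hb e)
  have hT0 : Fin.last (q + 1) ≠ (0 : Fin (q + 2)) := by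
    simp [Fin.ext_iff]
  -- Pset := (univ.erase 0).erase last
  have hTmemF : Fin.last (q + 1) ∈ (Finset.univ.erase (0 : Fin (q + 2))).erase i := by
    simp [hT0, Ne.symm hiT]
  have h0memG : (0 : Fin (q + 2)) ∈ (Finset.univ.erase (Fin.last (q + 1))).erase i := by
    simp [hT0.symm, Ne.symm hi0]
  have hiP : i ∈ (Finset.univ.erase (0 : Fin (q + 2))).erase (Fin.last (q + 1)) := by
    simp [hi0, hiT]
  have h0memD : (0 : Fin (q + 2)) ∈ Finset.univ.erase i := by simp [Ne.symm hi0]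
  have hTmemD : Fin.last (q + 1) ∈ (Finset.univ.erase i).erase (0 : Fin (q + 2)) := by
    simp [hT0, Ne.symm hiT]
  have hsetF : ((Finset.univ.erase (0 : Fin (q + 2))).erase i).erase (Fin.last (q + 1))
      = ((Finset.univ.erase (0 : Fin (q + 2))).erase (Fin.last (q + 1))).erase i :=
    Finset.erase_right_comm
  have hsetG : ((Finset.univ.erase (Fin.last (q + 1))).erase i).erase (0 : Fin (q + 2))
      = ((Finset.univ.erase (0 : Fin (q + 2))).erase (Fin.last (q + 1))).erase i := by
    rw [Finset.erase_right_comm, Finset.erase_right_comm (s := Finset.univ)]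
  have hsetD : (((Finset.univ.erase i).erase (0 : Fin (q + 2)))).erase (Fin.last (q + 1))
      = ((Finset.univ.erase (0 : Fin (q + 2))).erase (Fin.last (q + 1))).erase i := by
    rw [Finset.erase_right_comm (s := Finset.univ) (a := i) (b := (0 : Fin (q + 2))),
      Finset.erase_right_comm (s := Finset.univ.erase (0 : Fin (q + 2)))]
  have hF : ∏ l ∈ (Finset.univ.erase (0 : Fin (q + 2))).erase i, ((x - b l) / (b i - b l))
      = ((x - b (Fin.last (q + 1))) / (b i - b (Fin.last (q + 1))))
        * ∏ l ∈ ((Finset.univ.erase (0 : Fin (q + 2))).erase (Fin.last (q + 1))).erase i,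
            ((x - b l) / (b i - b l)) := by
    rw [← Finset.mul_prod_erase _ _ hTmemF, hsetF]
  have hG : ∏ l ∈ (Finset.univ.erase (Fin.last (q + 1))).erase i, ((x - b l) / (b i - b l))
      = ((x - b 0) / (b i - b 0))
        * ∏ l ∈ ((Finset.univ.erase (0 : Fin (q + 2))).erase (Fin.last (q + 1))).erase i,
            ((x - b l) / (b i - b l)) := by
    rw [← Finset.mul_prod_erase _ _ h0memG, hsetG]
  have hD : ∏ l ∈ Finset.univ.erase i, (b i - b l)
      = (b i - b 0) * ((b i - b (Fin.last (q + 1)))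
        * ∏ l ∈ ((Finset.univ.erase (0 : Fin (q + 2))).erase (Fin.last (q + 1))).erase i,
            (b i - b l)) := by
    rw [← Finset.mul_prod_erase _ _ h0memD, ← Finset.mul_prod_erase _ _ hTmemD, hsetD]
  have hP : ∏ l ∈ (Finset.univ.erase (0 : Fin (q + 2))).erase (Fin.last (q + 1)), (x - b l)
      = (x - b i)
        * ∏ l ∈ ((Finset.univ.erase (0 : Fin (q + 2))).erase (Fin.last (q + 1))).erase i,
            (x - b l) := by
    rw [← Finset.mul_prod_erase _ _ hiP]
  have hS : (∏ l ∈ ((Finset.univ.erase (0 : Fin (q + 2))).erase (Fin.last (q + 1))).erase i,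
      (b i - b l)) ≠ 0 := by
    refine Finset.prod_ne_zero_iff.mpr fun l hl => ?_
    simp only [Finset.mem_erase] at hl
    exact hne _ _ (Ne.symm hl.1)
  have h1 : b i - b 0 ≠ 0 := hne _ _ hi0
  have h2 : b i - b (Fin.last (q + 1)) ≠ 0 := hne _ _ hiT
  rw [FF, GG, HH, hF, hG, hD, hP, Finset.prod_div_distrib]
  field_simp
  ring

lemma KLgen {q : ℕ} (g : ℝ → ℝ) (b : Fin (q + 2) → ℝ) (hb : Function.Injective b) (x : ℝ) :
    lagEval g (fun i : Fin (q + 1) => b i.succ) x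
      - lagEval g (fun i : Fin (q + 1) => b i.castSucc) x
    = divDiff g b * (b (Fin.last (q + 1)) - b 0)
        * ∏ l ∈ (Finset.univ.erase (0 : Fin (q + 2))).erase (Fin.last (q + 1)), (x - b l) := by
  have hT0 : Fin.last (q + 1) ≠ (0 : Fin (q + 2)) := by simp [Fin.ext_iff]
  have hTmem : Fin.last (q + 1) ∈ Finset.univ.erase (0 : Fin (q + 2)) := by simp [hT0]
  have h0mem : (0 : Fin (q + 2)) ∈ Finset.univ.erase (Fin.last (q + 1)) := by simp [hT0.symm]
  have hsetG : (Finset.univ.erase (Fin.last (q + 1))).erase (0 : Fin (q + 2))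
      = (Finset.univ.erase (0 : Fin (q + 2))).erase (Fin.last (q + 1)) :=
    Finset.erase_right_comm
  rw [lag_succ, lag_castSucc, dd_expand]
  rw [← Finset.add_sum_erase _ (FF g b x) hTmem, ← Finset.add_sum_erase _ (GG g b x) h0mem,
    hsetG]
  rw [← Finset.add_sum_erase _ (HH g b x) (Finset.mem_univ (0 : Fin (q + 2))),
    ← Finset.add_sum_erase _ (HH g b x) hTmem]
  have hsum : ∑ i ∈ (Finset.univ.erase (0 : Fin (q + 2))).erase (Fin.last (q + 1)), FF g b x i
      - ∑ i ∈ (Finset.univ.erase (0 : Fin (q + 2))).erase (Fin.last (q + 1)), GG g b x i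
      = ∑ i ∈ (Finset.univ.erase (0 : Fin (q + 2))).erase (Fin.last (q + 1)), HH g b x i := by
    rw [← Finset.sum_sub_distrib]
    refine Finset.sum_congr rfl fun i hi => ?_
    simp only [Finset.mem_erase] at hi
    exact point_mid g b hb x i hi.2.1 hi.1
  have e1 := point_T g b hb x
  have e2 := point_0 g b hb x
  linarith

lemma prod_Pset_Icc {q j : ℕ} (hq : 1 ≤ q) (hqj : q ≤ j) (a : ℕ → ℝ) (x : ℝ) :
    ∏ l ∈ (Finset.univ.erase (0 : Fin (q + 2))).erase (Fin.last (q + 1)),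
        (x - a (j + 1 - (l : ℕ)))
      = ∏ k ∈ Finset.Icc (j - q + 1) j, (x - a k) := by
  refine Finset.prod_bij (fun l _ => j + 1 - (l : ℕ)) ?_ ?_ ?_ ?_
  · intro l hl
    simp only [Finset.mem_erase, Finset.mem_univ, and_true, Ne, Fin.ext_iff,
      Fin.val_last, Fin.val_zero] at hl
    have := l.isLt
    simp only [Finset.mem_Icc]
    omega
  · intro l₁ hl₁ l₂ hl₂ e
    simp only [Finset.mem_erase, Finset.mem_univ, and_true, Ne, Fin.ext_iff,
      Fin.val_last, Fin.val_zero] at hl₁ hl₂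
    have e' : j + 1 - (l₁ : ℕ) = j + 1 - (l₂ : ℕ) := e
    have := l₁.isLt; have := l₂.isLt
    exact Fin.ext (by omega)
  · intro k hk
    simp only [Finset.mem_Icc] at hk
    refine ⟨⟨j + 1 - k, by omega⟩, ?_, by simp; omega⟩
    simp only [Finset.mem_erase, Finset.mem_univ, and_true, Ne, Fin.ext_iff,
      Fin.val_last, Fin.val_zero]
    omega
  · intro l _; rfl

lemma KL {n q j : ℕ} (hq : 1 ≤ q) (hqj : q ≤ j) (hjn : j < n) (a : ℕ → ℝ)
    (hstrict : ∀ i k : ℕ, i < k → k ≤ n → a k < a i) (g : ℝ → ℝ) (x : ℝ) :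
    lagEval g (fun i : Fin (q + 1) => a (j - (i : ℕ))) x
      - lagEval g (fun i : Fin (q + 1) => a (j + 1 - (i : ℕ))) x
    = divDiff g (fun i : Fin (q + 2) => a (j + 1 - (i : ℕ))) * (a (j - q) - a (j + 1))
        * ∏ k ∈ Finset.Icc (j - q + 1) j, (x - a k) := by
  set b : Fin (q + 2) → ℝ := fun i => a (j + 1 - (i : ℕ)) with hbdef
  have hb : Function.Injective b := by
    intro i₁ i₂ e
    by_contra hne
    have h12 : (i₁ : ℕ) ≠ (i₂ : ℕ) := fun h => hne (Fin.ext h)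
    have hi₁ := i₁.isLt; have hi₂ := i₂.isLt
    have e' : a (j + 1 - (i₁ : ℕ)) = a (j + 1 - (i₂ : ℕ)) := e
    rcases Nat.lt_or_ge (j + 1 - (i₁ : ℕ)) (j + 1 - (i₂ : ℕ)) with h | h
    · have hlt := hstrict _ _ h (by omega)
      rw [e'] at hlt
      exact lt_irrefl _ hlt
    · have h' : j + 1 - (i₂ : ℕ) < j + 1 - (i₁ : ℕ) := by omega
      have hlt := hstrict _ _ h' (by omega)
      rw [e'] at hlt
      exact lt_irrefl _ hlt
  have h1 : (fun i : Fin (q + 1) => a (j - (i : ℕ))) = fun i : Fin (q + 1) => b i.succ := by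
    funext i
    simp only [hbdef, Fin.val_succ]
    congr 1
    omega
  have h2 : (fun i : Fin (q + 1) => a (j + 1 - (i : ℕ)))
      = fun i : Fin (q + 1) => b i.castSucc := by
    funext i
    simp only [hbdef, Fin.coe_castSucc]
  have h3 : a (j - q) = b (Fin.last (q + 1)) := by
    simp only [hbdef, Fin.val_last]
    congr 1
    omega
  have h4 : a (j + 1) = b 0 := by simp [hbdef]
  rw [h1, h2, h3, h4, KLgen g b hb x, ← prod_Pset_Icc hq hqj a x]

lemma tele (f : ℕ → ℝ) {m n : ℕ} (h : m ≤ n) :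
    ∑ j ∈ Finset.Ico m n, (f j - f (j + 1)) = f m - f n := by
  induction n, h using Nat.le_induction with
  | base => simp
  | succ n hmn ih =>
      rw [Finset.sum_Ico_succ_top hmn, ih]
      ring

/-- `Ψ_q(x, a_j) = ∏_{k=j-q+1}^{j} (x - a_k)` for `x > a_j` (and `0` otherwise),
extended by `Ψ_q(·, a_{q-1}) ≡ 0`. -/
noncomputable def PsiQ (a : ℕ → ℝ) (q j : ℕ) (x : ℝ) : ℝ :=
  if q ≤ j ∧ a j < x then ∏ k ∈ Finset.Icc (j - q + 1) j, (x - a k) else 0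

/-- First representation of the piecewise Lagrange spline `S_q` by truncated
power functions (Proposition, first form). -/
theorem statement7 (n q : ℕ) (hq : 1 ≤ q) (hqn : q ≤ n) (a : ℕ → ℝ)
    (hdec : ∀ j < n, a (j + 1) < a j) (g : ℝ → ℝ) (S : ℝ → ℝ)
    (hS1 : ∀ x ∈ Set.Icc (a q) (a 0),
      S x = lagEval g (fun i : Fin (q + 1) => a (q - (i : ℕ))) x)
    (hS2 : ∀ j : ℕ, q + 1 ≤ j → j ≤ n → ∀ x ∈ Set.Ico (a j) (a (j - 1)),
      S x = lagEval g (fun i : Fin (q + 1) => a (j - (i : ℕ))) x) :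
    ∀ x ∈ Set.Icc (a n) (a 0),
      S x = lagEval g (fun i : Fin (q + 1) => a (n - (i : ℕ))) x +
        ∑ j ∈ Finset.Ico q n,
          divDiff g (fun i : Fin (q + 2) => a (j + 1 - (i : ℕ))) *
            (a (j - q) - a (j + 1)) * PsiQ a q j x := by

  intro x hx
  have hstrict : ∀ i k : ℕ, i < k → k ≤ n → a k < a i := by
    intro i k hik hkn
    induction k with
    | zero => omega
    | succ k ih =>
        rcases Nat.lt_or_ge i k with h | h
        · exact lt_trans (hdec k (by omega)) (ih h (by omega))
        · have : i = k := by omega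
          subst this
          exact hdec i (by omega)
  have hmono : ∀ i k : ℕ, i ≤ k → k ≤ n → a k ≤ a i := by
    intro i k hik hkn
    rcases Nat.lt_or_ge i k with h | h
    · exact le_of_lt (hstrict i k h hkn)
    · obtain rfl : i = k := by omega
      exact le_refl _
  -- the spline function at level j
  set f : ℕ → ℝ := fun j => lagEval g (fun i : Fin (q + 1) => a (j - (i : ℕ))) x with hf
  -- find the index m
  obtain ⟨m, hqm, hmn, hSm, hamx, hbefore⟩ :
      ∃ m, q ≤ m ∧ m ≤ n ∧ S x = f m ∧ a m ≤ x ∧ ∀ j, q ≤ j → j < m → x < a j := by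
    by_cases hxq : a q ≤ x
    · exact ⟨q, le_refl q, hqn, hS1 x ⟨hxq, hx.2⟩, hxq, fun j h1 h2 => by omega⟩
    · push_neg at hxq
      have hex : ∃ j, a j ≤ x := ⟨n, hx.1⟩
      set m := Nat.find hex with hm
      have hamx : a m ≤ x := Nat.find_spec hex
      have hmn : m ≤ n := Nat.find_min' hex hx.1
      have hbefore : ∀ j, j < m → x < a j := by
        intro j hj
        have := Nat.find_min hex hj
        push_neg at this
        exact this
      have hqm : q + 1 ≤ m := by
        by_contra hc
        push_neg at hc
        exact absurd (le_trans (hmono m q (by omega) hqn) hamx) (not_le.mpr hxq)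
      refine ⟨m, by omega, hmn, ?_, hamx, fun j _ hj => hbefore j hj⟩
      refine hS2 m hqm hmn x ⟨hamx, ?_⟩
      exact hbefore (m - 1) (by omega)
  rw [hSm]
  -- split the sum
  rw [← Finset.sum_Ico_consecutive _ hqm hmn]
  have hzero : ∑ j ∈ Finset.Ico q m,
      divDiff g (fun i : Fin (q + 2) => a (j + 1 - (i : ℕ))) *
        (a (j - q) - a (j + 1)) * PsiQ a q j x = 0 := by
    refine Finset.sum_eq_zero fun j hj => ?_
    simp only [Finset.mem_Ico] at hj
    have : PsiQ a q j x = 0 := by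
      rw [PsiQ, if_neg]
      rintro ⟨-, h⟩
      exact absurd h (not_lt.mpr (le_of_lt (hbefore j hj.1 hj.2)))
    rw [this, mul_zero]
  have hmain : ∑ j ∈ Finset.Ico m n,
      divDiff g (fun i : Fin (q + 2) => a (j + 1 - (i : ℕ))) *
        (a (j - q) - a (j + 1)) * PsiQ a q j x
      = ∑ j ∈ Finset.Ico m n, (f j - f (j + 1)) := by
    refine Finset.sum_congr rfl fun j hj => ?_
    simp only [Finset.mem_Ico] at hj
    have hqj : q ≤ j := le_trans hqm hj.1
    have hkl : f j - f (j + 1)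
        = divDiff g (fun i : Fin (q + 2) => a (j + 1 - (i : ℕ))) *
            (a (j - q) - a (j + 1)) * ∏ k ∈ Finset.Icc (j - q + 1) j, (x - a k) :=
      KL hq hqj hj.2 a hstrict g x
    by_cases hjx : a j < x
    · rw [PsiQ, if_pos ⟨hqj, hjx⟩]
      exact hkl.symm
    · have hxaj : x = a j := le_antisymm (not_lt.mp hjx)
        (le_trans (hmono m j hj.1 (by omega)) hamx)
      have hPz : PsiQ a q j x = 0 := by rw [PsiQ, if_neg]; rintro ⟨-, h⟩; exact hjx h
      have hprodz : ∏ k ∈ Finset.Icc (j - q + 1) j, (x - a k) = 0 := by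
        refine Finset.prod_eq_zero (Finset.mem_Icc.mpr ⟨by omega, le_refl j⟩) ?_
        rw [hxaj, sub_self]
      rw [hPz, mul_zero]
      rw [hprodz, mul_zero] at hkl
      exact hkl.symm
  rw [hzero, hmain, tele f hmn, hf]
  ring
end

section
/- Let n, q ∈ ℕ with 1 ≤ q ≤ n, let a = a_n < a_{n-1} < … < a_1 < a_0 = b be reals, and let g : [a,b] → ℝ. Define the piecewise-polynomial function S_q : [a,b] → ℝ by S_q(x) = L(x; a_q,…,a_0; g) for x ∈ [a_q, b], and S_q(x) = L(x; a_j,…,a_{j-q}; g) for x ∈ [a_j, a_{j-1}) and j = q+1,…,n, where L(x; t_0,…,t_q; g) denotes the Lagrange interpolation polynomial of degree ≤ q to g at the nodes t_0,…,t_q. For j = q,…,n let Ψ_q(x, a_j) := Π_{k=j−q+1}^{j} (x − a_k) if x > a_j and Ψ_q(x, a_j) := 0 if x ≤ a_j, and set Ψ_q(x, a_{q-1}) :≡ 0. Then for all x ∈ [a,b]: S_q(x) = L(x; a_n,…,a_{n-q+1}; g) + Σ_{j=q}^{n} [a_j, a_{j-1}, …, a_{j-q}; g]·( Ψ_q(x,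 a_j) − Ψ_q(x, a_{j-1}) ). -/
open Finset

lemma erase_eq_map (m : ℕ) (i0 : Fin (m+1)) :
    ((univ : Finset (Fin (m+1))).erase i0) = univ.map (Fin.succAboveEmb i0) := by
  conv_lhs => rw [Fin.univ_succAbove m i0]
  rw [Finset.erase_cons]

lemma prod_erase_pivot {m : ℕ} (f : Fin (m+1) → ℝ) (i0 : Fin (m+1)) :
    ∏ l ∈ univ.erase i0, f l = ∏ l : Fin m, f (i0.succAbove l) := by
  rw [erase_eq_map, Finset.prod_map]; rfl

lemma erase_succAbove_eq {m : ℕ} (i0 : Fin (m+1)) (i : Fin m) :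
    (univ : Finset (Fin (m+1))).erase (i0.succAbove i)
      = insert i0 (((univ : Finset (Fin m)).erase i).map (Fin.succAboveEmb i0)) := by
  ext l
  simp only [mem_erase, mem_univ, and_true, mem_insert, mem_map, Fin.succAboveEmb,
    Function.Embedding.coeFn_mk]
  constructor
  · intro hl
    rcases eq_or_ne l i0 with h | h
    · exact Or.inl h
    · obtain ⟨b, hb⟩ := Fin.exists_succAbove_eq h
      exact Or.inr ⟨b, fun hbi => hl (by rw [← hb, hbi]), hb⟩
  · rintro (rfl | ⟨b, hbi, rfl⟩)
    · exact fun h => Fin.succAbove_ne _ i h.symm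
    · exact fun h => hbi (Fin.succAbove_right_injective h)

lemma prod_erase_succAbove {m : ℕ} (f : Fin (m+1) → ℝ) (i0 : Fin (m+1)) (i : Fin m) :
    ∏ l ∈ univ.erase (i0.succAbove i), f l
      = f i0 * ∏ l ∈ ((univ : Finset (Fin m)).erase i), f (i0.succAbove l) := by
  rw [erase_succAbove_eq, Finset.prod_insert (by simp [Fin.succAbove_ne]), Finset.prod_map]
  rfl

lemma newton {m : ℕ} (g : ℝ → ℝ) (t : Fin (m+1) → ℝ) (ht : Function.Injective t)
    (i0 : Fin (m+1)) (x : ℝ) :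
    lagEval g t x
      = lagEval g (t ∘ i0.succAbove) x
        + divDiff g t * ∏ l ∈ univ.erase i0, (x - t l) := by
  have key : ∀ i : Fin m,
      g (t (i0.succAbove i)) *
          ∏ l ∈ univ.erase (i0.succAbove i), ((x - t l) / (t (i0.succAbove i) - t l))
        = g (t (i0.succAbove i)) * ∏ l ∈ (univ : Finset (Fin m)).erase i,
              ((x - t (i0.succAbove l)) / (t (i0.succAbove i) - t (i0.succAbove l)))
          + (g (t (i0.succAbove i)) /
              ∏ l ∈ univ.erase (i0.succAbove i), (t (i0.succAbove i) - t l))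
              * ∏ l ∈ univ.erase i0, (x - t l) := by
    intro i
    rw [prod_erase_succAbove (fun l => (x - t l) / (t (i0.succAbove i) - t l)) i0 i,
      prod_erase_succAbove (fun l => t (i0.succAbove i) - t l) i0 i,
      prod_erase_pivot (fun l => x - t l) i0,
      ← Finset.mul_prod_erase (univ : Finset (Fin m))
          (fun l => x - t (i0.succAbove l)) (Finset.mem_univ i),
      Finset.prod_div_distrib]
    set A := ∏ l ∈ (univ : Finset (Fin m)).erase i, (x - t (i0.succAbove l)) with hA
    set B := ∏ l ∈ (univ : Finset (Fin m)).erase i,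
        (t (i0.succAbove i) - t (i0.succAbove l)) with hB
    have hd0 : t (i0.succAbove i) - t i0 ≠ 0 := by
      intro h
      exact (Fin.succAbove_ne i0 i) (ht (sub_eq_zero.mp h))
    have hB0 : B ≠ 0 := by
      rw [hB]
      apply Finset.prod_ne_zero_iff.mpr
      intro l hl h
      exact (Finset.ne_of_mem_erase hl)
        (Fin.succAbove_right_injective (ht (sub_eq_zero.mp h))).symm
    field_simp
    ring
  have pivot : g (t i0) * ∏ l ∈ univ.erase i0, ((x - t l) / (t i0 - t l))
      = (g (t i0) / ∏ l ∈ univ.erase i0, (t i0 - t l)) * ∏ l ∈ univ.erase i0, (x - t l) := by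
    rw [Finset.prod_div_distrib]; ring
  unfold lagEval divDiff
  rw [Fin.sum_univ_succAbove
      (fun i => g (t i) * ∏ l ∈ Finset.univ.erase i, ((x - t l) / (t i - t l))) i0,
    Fin.sum_univ_succAbove
      (fun i => g (t i) / ∏ l ∈ Finset.univ.erase i, (t i - t l)) i0,
    add_mul, Finset.sum_mul, pivot,
    Finset.sum_congr rfl (fun i _ => key i), Finset.sum_add_distrib]
  simp only [Function.comp]
  ring

lemma aStrict {n : ℕ} {a : ℕ → ℝ} (hdec : ∀ j < n, a (j + 1) < a j) :
    ∀ i j, i < j → j ≤ n → a j < a i := by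
  intro i j hij hjn
  induction j with
  | zero => omega
  | succ k ih =>
    rcases Nat.lt_or_ge i k with h | h
    · exact lt_trans (hdec k (by omega)) (ih h (by omega))
    · have : i = k := by omega
      subst this
      exact hdec i (by omega)

lemma tInj {n q j : ℕ} {a : ℕ → ℝ} (hdec : ∀ j < n, a (j + 1) < a j)
    (hq : q ≤ j) (hj : j ≤ n) :
    Function.Injective (fun i : Fin (q+1) => a (j - (i : ℕ))) := by
  have key : ∀ u v : ℕ, u < v → v ≤ q → a (j - u) < a (j - v) := by
    intro u v h1 h2
    exact aStrict hdec (j - v) (j - u) (by omega) (by omega)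
  intro i i' h
  simp only at h
  by_contra hne
  have hne' : (i : ℕ) ≠ (i' : ℕ) := fun hc => hne (Fin.ext hc)
  rcases Nat.lt_or_ge (i : ℕ) (i' : ℕ) with hlt | hge
  · exact absurd h (ne_of_lt (key _ _ hlt (by omega)))
  · exact absurd h (ne_of_gt (key _ _ (by omega) (by omega)))

lemma prodIcc {q m : ℕ} (a : ℕ → ℝ) (x : ℝ) (hq : 1 ≤ q) (hm : q ≤ m) :
    ∏ k ∈ Finset.Icc (m - q + 1) m, (x - a k) = ∏ i : Fin q, (x - a (m - (i : ℕ))) := by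
  rw [Fin.prod_univ_eq_prod_range (fun i => x - a (m - i)) q]
  apply Finset.prod_nbij' (fun k => m - k) (fun i => m - i)
  · intro k hk; simp only [Finset.mem_Icc] at hk; simp only [Finset.mem_range]; omega
  · intro i hi; simp only [Finset.mem_range] at hi; simp only [Finset.mem_Icc]; omega
  · intro k hk; simp only [Finset.mem_Icc] at hk; omega
  · intro i hi; simp only [Finset.mem_range] at hi; omega
  · intro k hk; simp only [Finset.mem_Icc] at hk
    rw [show m - (m - k) = k from by omega]

lemma dropLast {n q j : ℕ} {a : ℕ → ℝ} (g : ℝ → ℝ) (x : ℝ)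
    (hdec : ∀ j < n, a (j + 1) < a j) (hq : q ≤ j) (hj : j ≤ n) :
    lagEval g (fun i : Fin (q+1) => a (j - (i : ℕ))) x
      = lagEval g (fun i : Fin q => a (j - (i : ℕ))) x
        + divDiff g (fun i : Fin (q+1) => a (j - (i : ℕ)))
            * ∏ i : Fin q, (x - a (j - (i : ℕ))) := by
  have h := newton g (fun i : Fin (q+1) => a (j - (i : ℕ))) (tInj hdec hq hj) (Fin.last q) x
  rw [h, prod_erase_pivot (fun l => x - a (j - (l : ℕ))) (Fin.last q)]
  have h1 : ((fun i : Fin (q+1) => a (j - (i : ℕ))) ∘ (Fin.last q).succAbove)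
      = fun i : Fin q => a (j - (i : ℕ)) := by
    funext i
    simp [Fin.succAbove_last]
  have h2 : (fun l : Fin q => x - a (j - (((Fin.last q).succAbove l : Fin (q+1)) : ℕ)))
      = fun l : Fin q => x - a (j - (l : ℕ)) := by
    funext l
    simp [Fin.succAbove_last]
  rw [h1]
  congr 1
  congr 1
  apply Finset.prod_congr rfl
  intro l _
  simp [Fin.succAbove_last]

lemma dropZero {n q j : ℕ} {a : ℕ → ℝ} (g : ℝ → ℝ) (x : ℝ)
    (hdec : ∀ j < n, a (j + 1) < a j) (hq : q + 1 ≤ j) (hj : j ≤ n) :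
    lagEval g (fun i : Fin (q+1) => a (j - (i : ℕ))) x
      = lagEval g (fun i : Fin q => a (j - 1 - (i : ℕ))) x
        + divDiff g (fun i : Fin (q+1) => a (j - (i : ℕ)))
            * ∏ i : Fin q, (x - a (j - 1 - (i : ℕ))) := by
  have h := newton g (fun i : Fin (q+1) => a (j - (i : ℕ))) (tInj hdec (by omega) hj) (0 : Fin (q+1)) x
  rw [h, prod_erase_pivot (fun l => x - a (j - (l : ℕ))) (0 : Fin (q+1))]
  have h1 : ((fun i : Fin (q+1) => a (j - (i : ℕ))) ∘ (0 : Fin (q+1)).succAbove)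
      = fun i : Fin q => a (j - 1 - (i : ℕ)) := by
    funext i
    simp only [Function.comp, Fin.zero_succAbove, Fin.val_succ]
    congr 1
    omega
  have h2 : (fun l : Fin q => x - a (j - (((0 : Fin (q+1)).succAbove l : Fin (q+1)) : ℕ)))
      = fun l : Fin q => x - a (j - 1 - (l : ℕ)) := by
    funext l
    simp only [Fin.zero_succAbove, Fin.val_succ]
    congr 2
    omega
  rw [h1]
  congr 1
  congr 1
  apply Finset.prod_congr rfl
  intro l _
  simp only [Fin.zero_succAbove, Fin.val_succ]
  rw [show j - ((l : ℕ) + 1) = j - 1 - (l : ℕ) from by omega]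

lemma telescope (F : ℕ → ℝ) {q n : ℕ} (hq : 1 ≤ q) (hqn : q ≤ n) :
    ∑ j ∈ Finset.Icc q n, (F j - F (j-1)) = F n - F (q-1) := by
  induction n with
  | zero => omega
  | succ m ih =>
    rcases Nat.eq_or_lt_of_le hqn with h | h
    · rw [← h, Finset.Icc_self, Finset.sum_singleton]
    · rw [Finset.sum_Icc_succ_top (by omega : q ≤ m + 1), ih (by omega)]
      have : m + 1 - 1 = m := rfl
      rw [this]
      ring

/-- Second representation of the piecewise Lagrange spline `S_q` by truncated
power functions (Proposition, second form). -/
theorem statement8 (n q : ℕ) (hq : 1 ≤ q) (hqn : q ≤ n) (a : ℕ → ℝ)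
    (hdec : ∀ j < n, a (j + 1) < a j) (g : ℝ → ℝ) (S : ℝ → ℝ)
    (hS1 : ∀ x ∈ Set.Icc (a q) (a 0),
      S x = lagEval g (fun i : Fin (q + 1) => a (q - (i : ℕ))) x)
    (hS2 : ∀ j : ℕ, q + 1 ≤ j → j ≤ n → ∀ x ∈ Set.Ico (a j) (a (j - 1)),
      S x = lagEval g (fun i : Fin (q + 1) => a (j - (i : ℕ))) x) :
    ∀ x ∈ Set.Icc (a n) (a 0),
      S x = lagEval g (fun i : Fin q => a (n - (i : ℕ))) x +
        ∑ j ∈ Finset.Icc q n,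
          divDiff g (fun i : Fin (q + 1) => a (j - (i : ℕ))) *
            (PsiQ a q j x - PsiQ a q (j - 1) x) := by
  intro x hx
  have hexists : ∃ j, a j ≤ x := ⟨n, hx.1⟩
  set J := Nat.find hexists with hJdef
  have hJle : a J ≤ x := Nat.find_spec hexists
  have hJmin : ∀ m, m < J → x < a m := fun m hm => lt_of_not_ge (Nat.find_min hexists hm)
  have hJn : J ≤ n := Nat.find_le hx.1
  set Jq := max J q with hJq
  have hJq1 : q ≤ Jq := le_max_right _ _
  have hJqn : Jq ≤ n := max_le hJn hqn
  -- PsiQ evaluation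
  have hPsi : ∀ m, q ≤ m → m ≤ n →
      PsiQ a q m x = if Jq ≤ m then ∏ i : Fin q, (x - a (m - (i:ℕ))) else 0 := by
    intro m hmq hmn
    by_cases hc : Jq ≤ m
    · rw [if_pos hc]
      have hJm : J ≤ m := le_trans (le_max_left _ _) hc
      by_cases hax : a m < x
      · rw [PsiQ, if_pos ⟨hmq, hax⟩]
        exact prodIcc a x hq hmq
      · have hmJ : m = J := by
          by_contra h
          have : a m < a J := aStrict hdec J m (by omega) hmn
          exact hax (lt_of_lt_of_le this hJle)
        have hax' : a m = x := le_antisymm (hmJ ▸ hJle) (not_lt.mp hax)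
        rw [PsiQ, if_neg (by rintro ⟨-, h⟩; exact hax h)]
        symm
        apply Finset.prod_eq_zero (Finset.mem_univ (⟨0, by omega⟩ : Fin q))
        simp [hax']
    · rw [if_neg hc]
      have hmJ : m < J := by
        by_contra h
        exact hc (max_le (by omega) hmq)
      rw [PsiQ, if_neg]
      rintro ⟨-, h⟩
      exact absurd h (not_lt.mpr (le_of_lt (hJmin m hmJ)))
  have hPsiPrev : ∀ j, q ≤ j → j ≤ n → j - 1 < Jq → PsiQ a q (j-1) x = 0 := by
    intro j h1 h2 h3
    rcases Nat.eq_or_lt_of_le h1 with h | h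
    · rw [← h, PsiQ, if_neg (by rintro ⟨h', -⟩; omega)]
    · rw [hPsi (j-1) (by omega) (by omega), if_neg (by omega)]
  -- the telescoping function
  set F : ℕ → ℝ := fun m => if Jq ≤ m then
      (lagEval g (fun i : Fin (q+1) => a (Jq - (i:ℕ))) x
        - lagEval g (fun i : Fin q => a (m - (i:ℕ))) x) else 0 with hF
  have hterm : ∀ j ∈ Finset.Icc q n,
      divDiff g (fun i : Fin (q + 1) => a (j - (i : ℕ))) *
          (PsiQ a q j x - PsiQ a q (j - 1) x) = F j - F (j-1) := by
    intro j hj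
    simp only [Finset.mem_Icc] at hj
    obtain ⟨hj1, hj2⟩ := hj
    rcases lt_trichotomy j Jq with hlt | heq | hgt
    · rw [hPsi j hj1 hj2, if_neg (by omega), hPsiPrev j hj1 hj2 (by omega), hF]
      simp only
      rw [if_neg (by omega), if_neg (by omega)]
      ring
    · rw [hPsi j hj1 hj2, if_pos (by omega), hPsiPrev j hj1 hj2 (by omega), hF]
      simp only
      rw [if_pos (by omega), if_neg (by omega), ← heq]
      have hdl := dropLast g x hdec hj1 hj2
      linarith
    · have hj1' : q + 1 ≤ j := by omega
      rw [hPsi j hj1 hj2, if_pos (by omega),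
        hPsi (j-1) (by omega) (by omega), if_pos (by omega), hF]
      simp only
      rw [if_pos (by omega), if_pos (by omega)]
      have hdl := dropLast g x hdec hj1 hj2
      have hdz := dropZero g x hdec hj1' hj2
      linarith
  have hSx : S x = lagEval g (fun i : Fin (q+1) => a (Jq - (i:ℕ))) x := by
    rcases le_or_gt J q with h | h
    · have hJqe : Jq = q := max_eq_right h
      rw [hJqe]
      apply hS1 x
      refine ⟨?_, hx.2⟩
      rcases Nat.eq_or_lt_of_le h with h' | h'
      · rw [← h']; exact hJle
      · exact le_trans (le_of_lt (aStrict hdec J q h' hqn)) hJle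
    · have hJqe : Jq = J := max_eq_left (le_of_lt h)
      rw [hJqe]
      exact hS2 J (by omega) hJn x ⟨hJle, hJmin (J-1) (by omega)⟩
  rw [hSx, Finset.sum_congr rfl hterm, telescope F hq hqn, hF]
  simp only
  rw [if_pos hJqn, if_neg (by omega)]
  ring
end

section
/- Let a < c < b and t_1, t_2, t_3 be reals. Set ĥ_1 := c − a, ĥ_2 := b − c, h̃_1 := (b−t_1) + (b−t_2) + (b−t_3), h̃_2 := (b−t_1)(b−t_2) + (b−t_1)(b−t_3) + (b−t_2)(b−t_3), h̃_3 := (b−t_1)(b−t_2)(b−t_3), and define α := (h̃_1·ĥ_2² − 2·h̃_2·ĥ_2 + 3·h̃_3)/(3·ĥ_1²·(ĥ_1+ĥ_2)), β := (h̃_1·ĥ_2·(ĥ_1+ĥ_2)·(2ĥ_1−ĥ_2) − h̃_2·(ĥ_1² − 2ĥ_2² + 2ĥ_1ĥ_2) − 3·h̃_3·(ĥ_2−ĥ_1))/(3·ĥ_1²·ĥ_2²), γ := h̃_1 − 3α(ĥ_1+ĥ_2) − 3βĥ_2. Then for every x ≥ b: α(x−a)³ + β(x−c)³ + γ(x−c)²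 + (1−α−β)(x−b)³ = (x−t_1)(x−t_2)(x−t_3). -/
/-- For `x ≥ b`, the truncated-power combination defining `φ_j` reproduces the
cubic `(x−t₁)(x−t₂)(x−t₃)` (the key algebraic identity behind (13)–(14)). -/
theorem statement10 (a c b t1 t2 t3 : ℝ) (hac : a < c) (hcb : c < b)
    (h1 h2 g1 g2 g3 α β γ : ℝ)
    (hh1 : h1 = c - a) (hh2 : h2 = b - c)
    (hg1 : g1 = (b - t1) + (b - t2) + (b - t3))
    (hg2 : g2 = (b - t1) * (b - t2) + (b - t1) * (b - t3) + (b - t2) * (b - t3))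
    (hg3 : g3 = (b - t1) * (b - t2) * (b - t3))
    (hα : α = (g1 * h2 ^ 2 - 2 * g2 * h2 + 3 * g3) / (3 * h1 ^ 2 * (h1 + h2)))
    (hβ : β = (g1 * h2 * (h1 + h2) * (2 * h1 - h2) -
        g2 * (h1 ^ 2 - 2 * h2 ^ 2 + 2 * h1 * h2) - 3 * g3 * (h2 - h1)) /
        (3 * h1 ^ 2 * h2 ^ 2))
    (hγ : γ = g1 - 3 * α * (h1 + h2) - 3 * β * h2) :
    ∀ x : ℝ, b ≤ x →
      α * (x - a) ^ 3 + β * (x - c) ^ 3 + γ * (x - c) ^ 2 +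
        (1 - α - β) * (x - b) ^ 3 = (x - t1) * (x - t2) * (x - t3) := by
  intro x hx
  have hh1p : h1 ≠ 0 := by rw [hh1]; linarith
  have hh2p : h2 ≠ 0 := by rw [hh2]; linarith
  have hh12 : h1 + h2 ≠ 0 := by rw [hh1, hh2]; linarith
  subst hγ hα hβ hg1 hg2 hg3
  field_simp
  rw [hh1, hh2] at *
  ring
end

section
/- Let h > 0, let u_0 < u_1 < … < u_5 be equidistant reals with u_{k+1} − u_k = h, all lying in [a,b], and let f ∈ Δ³[a,b]. Set D_k := [u_k, u_{k+1}, u_{k+2}, u_{k+3}; f] for k = 0, 1, 2, assume D_0 ≤ D_1 and D_2 < D_1, and define d := ( (u_1+u_2)·D_0 + (u_2+u_3)·D_1 + (u_3+u_4)·D_2 ) / ( 2(D_0 + D_1 + D_2) ). Then u_2 ≤ d ≤ u_3. -/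
/-- The center `d = d_j` of the parabola `P_j` lies in `[u₂, u₃]` (i.e. `d_j ∈ I_{j-1}`)
for equidistant points, when `D₀ ≤ D₁` and `D₂ < D₁`. -/
theorem statement12 (a b h : ℝ) (hh : 0 < h) (u0 u1 u2 u3 u4 u5 : ℝ)
    (h1 : u1 = u0 + h) (h2 : u2 = u1 + h) (h3 : u3 = u2 + h)
    (h4 : u4 = u3 + h) (h5 : u5 = u4 + h)
    (hm0 : u0 ∈ Set.Icc a b) (hm1 : u1 ∈ Set.Icc a b) (hm2 : u2 ∈ Set.Icc a b)
    (hm3 : u3 ∈ Set.Icc a b) (hm4 : u4 ∈ Set.Icc a b) (hm5 : u5 ∈ Set.Icc a b)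
    (f : ℝ → ℝ) (hf : Delta3 a b f)
    (D0 D1 D2 : ℝ)
    (hD0 : D0 = dd4 f u0 u1 u2 u3) (hD1 : D1 = dd4 f u1 u2 u3 u4)
    (hD2 : D2 = dd4 f u2 u3 u4 u5)
    (h01 : D0 ≤ D1) (h21 : D2 < D1)
    (d : ℝ)
    (hd : d = ((u1 + u2) * D0 + (u2 + u3) * D1 + (u3 + u4) * D2) /
        (2 * (D0 + D1 + D2))) :
    u2 ≤ d ∧ d ≤ u3 := by
  have hne : ∀ x y : ℝ, x < y → x ≠ y := fun x y hxy => ne_of_lt hxy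
  have l01 : u0 < u1 := by linarith
  have l12 : u1 < u2 := by linarith
  have l23 : u2 < u3 := by linarith
  have l34 : u3 < u4 := by linarith
  have l45 : u4 < u5 := by linarith
  have hD0n : 0 ≤ D0 := by
    rw [hD0]
    exact hf.2 u0 u1 u2 u3 hm0 hm1 hm2 hm3 (by linarith) (by linarith) (by linarith)
      (by linarith) (by linarith) (by linarith)
  have hD2n : 0 ≤ D2 := by
    rw [hD2]
    exact hf.2 u2 u3 u4 u5 hm2 hm3 hm4 hm5 (by linarith) (by linarith) (by linarith)
      (by linarith) (by linarith) (by linarith)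
  have hD1p : 0 < D1 := lt_of_le_of_lt hD2n h21
  have hS : 0 < 2 * (D0 + D1 + D2) := by linarith
  constructor
  · rw [hd, le_div_iff₀ hS]; nlinarith
  · rw [hd, div_le_iff₀ hS]; nlinarith
end

section
/- Let h > 0, let u_0 < u_1 < … < u_5 be equidistant reals with u_{k+1} − u_k = h, all lying in [a,b], and let f ∈ Δ³[a,b]. Set D_k := [u_k, u_{k+1}, u_{k+2}, u_{k+3}; f] for k = 0, 1, 2, assume D_0 ≤ D_1 and D_2 < D_1, and define d := ( (u_1+u_2)·D_0 + (u_2+u_3)·D_1 + (u_3+u_4)·D_2 ) / ( 2(D_0 + D_1 + D_2) ) and P(x) := 3h·( D_0·(x−u_1)(x−u_2) + D_1·(x−u_2)(x−u_3) + D_2·(x−u_3)(x−u_4) ). Then H := P(d), the minimum value of the upward parabola P, satisfies H ≥ 0. -/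
set_option maxHeartbeats 1000000 in
private lemma dd4_key (h : ℝ) (hne : h ≠ 0) (u0 u1 u2 u3 u4 u5 : ℝ)
    (h1 : u1 = u0 + h) (h2 : u2 = u1 + h) (h3 : u3 = u2 + h)
    (h4 : u4 = u3 + h) (h5 : u5 = u4 + h)
    (f : ℝ → ℝ) (d : ℝ)
    (e0 : d - u0 ≠ 0) (e1 : d - u0 - 1*h ≠ 0) (e2 : d - u0 - 2*h ≠ 0)
    (e3 : d - u0 - 3*h ≠ 0) (e4 : d - u0 - 4*h ≠ 0) (e5 : d - u0 - 5*h ≠ 0) :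
    3 * h * (dd4 f u0 u1 u2 u3 * (d - u1) * (d - u2) +
      dd4 f u1 u2 u3 u4 * (d - u2) * (d - u3) +
      dd4 f u2 u3 u4 u5 * (d - u3) * (d - u4))
    = (d - u0) * (d - u1) * (d - u2) * dd4 f u0 u1 u2 d
      + (u3 - d) * (u4 - d) * (u5 - d) * dd4 f u3 u4 u5 d := by
  have A0 : dd4 f u0 u1 u2 u3 = (f u3 - 3*f u2 + 3*f u1 - f u0) / (6*h^3) := by
    unfold dd4
    rw [show u0 - u1 = -h by linarith, show u0 - u2 = -(2*h) by linarith,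
      show u0 - u3 = -(3*h) by linarith, show u1 - u0 = h by linarith,
      show u1 - u2 = -h by linarith, show u1 - u3 = -(2*h) by linarith,
      show u2 - u0 = 2*h by linarith, show u2 - u1 = h by linarith,
      show u2 - u3 = -h by linarith, show u3 - u0 = 3*h by linarith,
      show u3 - u1 = 2*h by linarith, show u3 - u2 = h by linarith]
    field_simp; ring
  have A1 : dd4 f u1 u2 u3 u4 = (f u4 - 3*f u3 + 3*f u2 - f u1) / (6*h^3) := by
    unfold dd4
    rw [show u1 - u2 = -h by linarith, show u1 - u3 = -(2*h) by linarith,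
      show u1 - u4 = -(3*h) by linarith, show u2 - u1 = h by linarith,
      show u2 - u3 = -h by linarith, show u2 - u4 = -(2*h) by linarith,
      show u3 - u1 = 2*h by linarith, show u3 - u2 = h by linarith,
      show u3 - u4 = -h by linarith, show u4 - u1 = 3*h by linarith,
      show u4 - u2 = 2*h by linarith, show u4 - u3 = h by linarith]
    field_simp; ring
  have A2 : dd4 f u2 u3 u4 u5 = (f u5 - 3*f u4 + 3*f u3 - f u2) / (6*h^3) := by
    unfold dd4
    rw [show u2 - u3 = -h by linarith, show u2 - u4 = -(2*h) by linarith,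
      show u2 - u5 = -(3*h) by linarith, show u3 - u2 = h by linarith,
      show u3 - u4 = -h by linarith, show u3 - u5 = -(2*h) by linarith,
      show u4 - u2 = 2*h by linarith, show u4 - u3 = h by linarith,
      show u4 - u5 = -h by linarith, show u5 - u2 = 3*h by linarith,
      show u5 - u3 = 2*h by linarith, show u5 - u4 = h by linarith]
    field_simp; ring
  have B1 : (d - u0) * (d - u1) * (d - u2) * dd4 f u0 u1 u2 d =
      (-(f u0 * ((d - u0 - 1*h) * (d - u0 - 2*h))) + 2 * f u1 * ((d - u0) * (d - u0 - 2*h))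
        - f u2 * ((d - u0) * (d - u0 - 1*h)) + 2 * h^2 * f d)
      / (2 * h^2) := by
    unfold dd4
    rw [show u0 - u1 = -h by linarith, show u0 - u2 = -(2*h) by linarith,
      show u1 - u0 = h by linarith, show u1 - u2 = -h by linarith,
      show u2 - u0 = 2*h by linarith, show u2 - u1 = h by linarith,
      show u0 - d = -(d - u0) by linarith, show u1 - d = -(d - u0 - 1*h) by linarith,
      show u2 - d = -(d - u0 - 2*h) by linarith,
      show d - u1 = d - u0 - 1*h by linarith, show d - u2 = d - u0 - 2*h by linarith]
    generalize hg : d - u0 = t at e0 e1 e2 ⊢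
    have e1' : h - t ≠ 0 := fun hc => e1 (by linarith)
    have e1'' : t - h ≠ 0 := fun hc => e1 (by linarith)
    have e2' : 2*h - t ≠ 0 := fun hc => e2 (by linarith)
    rw [div_add_div _ _ (by simp [hne, e0, e1, e2, e1', e1'', e2'])
        (by simp [hne, e0, e1, e2, e1', e1'', e2']),
      div_add_div _ _ (by simp [hne, e0, e1, e2, e1', e1'', e2'])
        (by simp [hne, e0, e1, e2, e1', e1'', e2']),
      div_add_div _ _ (by simp [hne, e0, e1, e2, e1', e1'', e2'])
        (by simp [hne, e0, e1, e2, e1', e1'', e2']),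
      ← mul_div_assoc,
      div_eq_div_iff (by simp [hne, e0, e1, e2, e1', e1'', e2']) (by simp [hne])]
    ring
  have B2 : (u3 - d) * (u4 - d) * (u5 - d) * dd4 f u3 u4 u5 d =
      (f u3 * ((d - u0 - 4*h) * (d - u0 - 5*h)) - 2 * f u4 * ((d - u0 - 3*h) * (d - u0 - 5*h))
        + f u5 * ((d - u0 - 3*h) * (d - u0 - 4*h)) - 2 * h^2 * f d)
      / (2 * h^2) := by
    unfold dd4
    rw [show u3 - u4 = -h by linarith, show u3 - u5 = -(2*h) by linarith,
      show u4 - u3 = h by linarith, show u4 - u5 = -h by linarith,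
      show u5 - u3 = 2*h by linarith, show u5 - u4 = h by linarith,
      show u3 - d = -(d - u0 - 3*h) by linarith, show u4 - d = -(d - u0 - 4*h) by linarith,
      show u5 - d = -(d - u0 - 5*h) by linarith,
      show d - u3 = d - u0 - 3*h by linarith, show d - u4 = d - u0 - 4*h by linarith,
      show d - u5 = d - u0 - 5*h by linarith]
    generalize hg : d - u0 = t at e3 e4 e5 ⊢
    have e3' : 3*h - t ≠ 0 := fun hc => e3 (by linarith)
    have e3'' : t - 3*h ≠ 0 := fun hc => e3 (by linarith)
    have e4' : 4*h - t ≠ 0 := fun hc => e4 (by linarith)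
    have e4'' : t - 4*h ≠ 0 := fun hc => e4 (by linarith)
    have e5' : 5*h - t ≠ 0 := fun hc => e5 (by linarith)
    have e5'' : t - 5*h ≠ 0 := fun hc => e5 (by linarith)
    rw [div_add_div _ _ (by simp [hne, e3', e3'', e4', e4'', e5', e5''])
        (by simp [hne, e3', e3'', e4', e4'', e5', e5'']),
      div_add_div _ _ (by simp [hne, e3', e3'', e4', e4'', e5', e5''])
        (by simp [hne, e3', e3'', e4', e4'', e5', e5'']),
      div_add_div _ _ (by simp [hne, e3', e3'', e4', e4'', e5', e5''])
        (by simp [hne, e3', e3'', e4', e4'', e5', e5'']),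
      ← mul_div_assoc,
      div_eq_div_iff (by simp [hne, e3', e3'', e4', e4'', e5', e5'']) (by simp [hne])]
    ring
  rw [A0, A1, A2, B1, B2,
    show d - u1 = d - u0 - 1*h by linarith, show d - u2 = d - u0 - 2*h by linarith,
    show d - u3 = d - u0 - 3*h by linarith, show d - u4 = d - u0 - 4*h by linarith]
  field_simp
  ring

/-- Inequality (18): the minimum value `H = P(d)` of the upward parabola
`P(x) = 3h(D₀(x−u₁)(x−u₂) + D₁(x−u₂)(x−u₃) + D₂(x−u₃)(x−u₄))` is nonnegative. -/
theorem statement13 (a b h : ℝ) (hh : 0 < h) (u0 u1 u2 u3 u4 u5 : ℝ)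
    (h1 : u1 = u0 + h) (h2 : u2 = u1 + h) (h3 : u3 = u2 + h)
    (h4 : u4 = u3 + h) (h5 : u5 = u4 + h)
    (hm0 : u0 ∈ Set.Icc a b) (hm1 : u1 ∈ Set.Icc a b) (hm2 : u2 ∈ Set.Icc a b)
    (hm3 : u3 ∈ Set.Icc a b) (hm4 : u4 ∈ Set.Icc a b) (hm5 : u5 ∈ Set.Icc a b)
    (f : ℝ → ℝ) (hf : Delta3 a b f)
    (D0 D1 D2 : ℝ)
    (hD0 : D0 = dd4 f u0 u1 u2 u3) (hD1 : D1 = dd4 f u1 u2 u3 u4)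
    (hD2 : D2 = dd4 f u2 u3 u4 u5)
    (h01 : D0 ≤ D1) (h21 : D2 < D1)
    (d : ℝ)
    (hd : d = ((u1 + u2) * D0 + (u2 + u3) * D1 + (u3 + u4) * D2) /
        (2 * (D0 + D1 + D2)))
    (P : ℝ → ℝ)
    (hP : ∀ x, P x = 3 * h * (D0 * (x - u1) * (x - u2) + D1 * (x - u2) * (x - u3) +
        D2 * (x - u3) * (x - u4)))
    (H : ℝ) (hH : H = P d) :
    0 ≤ H := by
  have hne : h ≠ 0 := ne_of_gt hh
  have hD0n : 0 ≤ D0 := by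
    rw [hD0]; exact hf.2 u0 u1 u2 u3 hm0 hm1 hm2 hm3 (by linarith) (by linarith)
      (by linarith) (by linarith) (by linarith) (by linarith)
  have hD2n : 0 ≤ D2 := by
    rw [hD2]; exact hf.2 u2 u3 u4 u5 hm2 hm3 hm4 hm5 (by linarith) (by linarith)
      (by linarith) (by linarith) (by linarith) (by linarith)
  have hD1p : 0 < D1 := lt_of_le_of_lt hD2n h21
  have hS : 0 < 2 * (D0 + D1 + D2) := by linarith
  have hd2 : u2 ≤ d := by
    rw [hd, le_div_iff₀ hS]
    nlinarith [mul_nonneg hh.le (sub_nonneg.2 h01), mul_nonneg hh.le hD2n,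
      mul_nonneg hh.le hD0n, mul_nonneg hh.le (sub_nonneg.2 h21.le)]
  have hd3 : d < u3 := by
    rw [hd, div_lt_iff₀ hS]
    nlinarith [mul_pos hh (show 0 < 3*D0 + D1 - D2 by linarith)]
  have hdab : d ∈ Set.Icc a b :=
    ⟨le_trans hm2.1 hd2, le_trans (le_of_lt hd3) hm3.2⟩
  rcases eq_or_lt_of_le hd2 with hdeq | hdlt
  · -- d = u2 : H = 6 h³ D2 ≥ 0
    rw [hH, hP, ← hdeq]
    have e : 3 * h * (D0 * (u2 - u1) * (u2 - u2) + D1 * (u2 - u2) * (u2 - u3) +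
        D2 * (u2 - u3) * (u2 - u4)) = 6 * (h * h * h) * D2 := by
      subst h1 h2 h3 h4 h5; ring
    rw [e]
    have : 0 < h * h * h := by positivity
    nlinarith
  · have e0 : d - u0 ≠ 0 := by intro hc; linarith
    have e1 : d - u0 - 1*h ≠ 0 := by intro hc; linarith
    have e2 : d - u0 - 2*h ≠ 0 := by intro hc; linarith
    have e3 : d - u0 - 3*h ≠ 0 := by intro hc; linarith
    have e4 : d - u0 - 4*h ≠ 0 := by intro hc; linarith
    have e5 : d - u0 - 5*h ≠ 0 := by intro hc; linarith
    have Z1 : 0 ≤ dd4 f u0 u1 u2 d :=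
      hf.2 u0 u1 u2 d hm0 hm1 hm2 hdab (by linarith) (by linarith) (by linarith)
        (by linarith) (by linarith) (by linarith)
    have Z2 : 0 ≤ dd4 f u3 u4 u5 d :=
      hf.2 u3 u4 u5 d hm3 hm4 hm5 hdab (by linarith) (by linarith) (by linarith)
        (by linarith) (by linarith) (by linarith)
    have key : H = (d - u0) * (d - u1) * (d - u2) * dd4 f u0 u1 u2 d
        + (u3 - d) * (u4 - d) * (u5 - d) * dd4 f u3 u4 u5 d := by
      rw [hH, hP d, hD0, hD1, hD2]
      exact dd4_key h hne u0 u1 u2 u3 u4 u5 h1 h2 h3 h4 h5 f d e0 e1 e2 e3 e4 e5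
    rw [key]
    have p0 : 0 < d - u0 := by linarith
    have p1 : 0 < d - u1 := by linarith
    have p2 : 0 < d - u2 := by linarith
    have q3 : 0 < u3 - d := by linarith
    have q4 : 0 < u4 - d := by linarith
    have q5 : 0 < u5 - d := by linarith
    have m1 := mul_nonneg (le_of_lt (mul_pos (mul_pos p0 p1) p2)) Z1
    have m2 := mul_nonneg (le_of_lt (mul_pos (mul_pos q3 q4) q5)) Z2
    linarith
end
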